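/- arXiv:1506.04225 — 2 statements merged into one kernel-verified Lean document; each statement's English description precedes it below -/
import Mathlib

section
/- No 3-critical graph G contains seven distinct vertices v1, v2, v3, v4, v5, v6, v7 such that v1, v2, v3, v4 have degree 3 in G, v5, v6, v7 have degree 2 in G, and v1v2, v2v3, v3v4, v4v1, v2v5, v3v6, v4v7 are all edges of G (that is, a 4-cycle of 3-vertices, three of which have pairwise distinct 2-neighbors off the cycle). -/
set_option linter.unusedSectionVars false
set_option linter.unusedVariables false
open Classical



/-- A proper edge coloring of `G` with `n` colors: edges sharing an endpoint
get distinct colors. -/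
def EdgeColorable {V : Type*} (G : SimpleGraph V) (n : ℕ) : Prop :=
  ∃ C : G.edgeSet → Fin n, ∀ e₁ e₂ : G.edgeSet, e₁ ≠ e₂ →
    (∃ v, v ∈ (e₁ : Sym2 V) ∧ v ∈ (e₂ : Sym2 V)) → C e₁ ≠ C e₂

/-- The chromatic index (edge chromatic number) of `G`. -/
noncomputable def chromIndex {V : Type*} (G : SimpleGraph V) : ℕ :=
  sInf {n | EdgeColorable G n}

/-- The degree of a vertex. -/
noncomputable def deg {V : Type*} (G : SimpleGraph V) (v : V) : ℕ :=
  (G.neighborSet v).ncard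

/-- A graph with maximum degree `k` is `k`-critical if `χ'(G) = k + 1` and
`χ'(G - e) = k` for every edge `e`. -/
def IsCritical {V : Type*} (k : ℕ) (G : SimpleGraph V) : Prop :=
  (∀ v, deg G v ≤ k) ∧ (∃ v, deg G v = k) ∧
  chromIndex G = k + 1 ∧
  ∀ e ∈ G.edgeSet, chromIndex (G.deleteEdges {e}) = k

/-- The Hajós join of `G₁` and `G₂` along edges `v₁v₂` and `v₃v₄`: delete the
two edges, identify `v₁` with `v₃`, and add the edge `v₂v₄`. -/
def hajosJoin {V₁ V₂ : Type*} (G₁ : SimpleGraph V₁) (G₂ : SimpleGraph V₂)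
    (v₁ v₂ : V₁) (v₃ v₄ : V₂) :
    SimpleGraph (V₁ ⊕ {x : V₂ // x ≠ v₃}) :=
  SimpleGraph.fromRel fun a b =>
    match a, b with
    | Sum.inl x, Sum.inl y => G₁.Adj x y ∧ s(x, y) ≠ s(v₁, v₂)
    | Sum.inl x, Sum.inr y => (x = v₁ ∧ G₂.Adj v₃ y.1 ∧ y.1 ≠ v₄) ∨ (x = v₂ ∧ y.1 = v₄)
    | Sum.inr _, Sum.inl _ => False
    | Sum.inr x, Sum.inr y => G₂.Adj x.1 y.1 ∧ s(x.1, y.1) ≠ s(v₃, v₄)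

/-- `G` is a Hajós join of `G₁` and `G₂`. -/
def IsHajosJoin {W V₁ V₂ : Type*} (G : SimpleGraph W)
    (G₁ : SimpleGraph V₁) (G₂ : SimpleGraph V₂) : Prop :=
  ∃ (v₁ v₂ : V₁) (v₃ v₄ : V₂), G₁.Adj v₁ v₂ ∧ G₂.Adj v₃ v₄ ∧
    Nonempty (G ≃g hajosJoin G₁ G₂ v₁ v₂ v₃ v₄)

/-- Vertices of the Petersen graph: 2-element subsets of a 5-element set. -/
abbrev KVert : Type := {s : Finset (Fin 5) // s.card = 2}

/-- The Petersen graph, as the Kneser graph K(5,2). -/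
def Petersen : SimpleGraph KVert where
  Adj a b := Disjoint a.1 b.1
  symm := ⟨fun a b h => h.symm⟩
  loopless := ⟨fun a h => by
    have h2 := a.2
    have h' : (a.1 : Finset (Fin 5)) = ∅ := disjoint_self.mp h
    rw [h'] at h2
    simp at h2⟩

/-- A fixed vertex of the Petersen graph. -/
def pstarV : KVert := ⟨{0, 1}, by decide⟩

/-- The vertex set of the Petersen graph minus one vertex. -/
abbrev PV : Type := {x : KVert // x ≠ pstarV}

/-- `P*`: the Petersen graph with one vertex deleted. -/
def PStar : SimpleGraph PV where
  Adj a b := Petersen.Adj a.1 b.1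
  symm := ⟨fun a b h => Petersen.adj_symm h⟩
  loopless := ⟨fun a h => Petersen.irrefl h⟩

lemma edgeColorable_of_finite {V : Type*} [Finite V] (G : SimpleGraph V) :
    ∃ n, EdgeColorable G n := by
  have : Finite G.edgeSet := Set.Finite.to_subtype (Set.toFinite _)
  obtain ⟨n, ⟨f⟩⟩ := Finite.exists_equiv_fin G.edgeSet
  exact ⟨n, f, fun e₁ e₂ hne _ h => hne (f.injective h)⟩

lemma chromIndex_colorable {V : Type*} [Finite V] (G : SimpleGraph V) :
    EdgeColorable G (chromIndex G) :=
  Nat.sInf_mem (edgeColorable_of_finite G)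

lemma chromIndex_le {V : Type*} {G : SimpleGraph V} {n : ℕ} (h : EdgeColorable G n) :
    chromIndex G ≤ n := Nat.sInf_le h


set_option maxHeartbeats 4000000 in
set_option synthInstance.maxHeartbeats 2000000 in
set_option synthInstance.maxSize 3000 in
lemma DEC1' : ∀ a1 a5 a6 a7 : Fin 3, (a1 = a5 ∧ a1 = a7) ∨
    ∃ f1 f2 f3 f4 f5 f6 f7 : Fin 3,
      (f1 ≠ f3 ∧ f1 ≠ a1 ∧ f3 ≠ a1 ∧ f1 ≠ f4 ∧ f2 ≠ f5 ∧ f2 ≠ f3 ∧ f2 ≠ f6 ∧ f3 ≠ f6 ∧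
       f4 ≠ a5 ∧ f5 ≠ a6 ∧ f6 ≠ a7) ∧
      f7 ≠ f1 ∧ f7 ≠ f4 ∧ f7 ≠ f2 ∧ f7 ≠ f5 := by decide

set_option maxHeartbeats 4000000 in
set_option synthInstance.maxHeartbeats 2000000 in
set_option synthInstance.maxSize 3000 in
lemma DEC2' : ∀ e1 e2 e3 e4 e5 e6 a1 a6 : Fin 3,
    ¬ (e1 ≠ e3 ∧ e1 ≠ a1 ∧ e3 ≠ a1 ∧ e1 ≠ e4 ∧ e2 ≠ e5 ∧ e2 ≠ e3 ∧ e2 ≠ e6 ∧ e3 ≠ e6 ∧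
       e4 ≠ a1 ∧ e5 ≠ a6 ∧ e6 ≠ a1) ∨
    (∃ m : Fin 3, m ≠ e1 ∧ m ≠ e4 ∧ m ≠ e2 ∧ m ≠ e5) ∨
    (e2 = a1 ∧ e4 = e3 ∧ e6 = e1 ∧ e1 ≠ a1 ∧ e3 ≠ a1 ∧ e1 ≠ e3 ∧ (e5 = e1 ∨ e5 = e3)) := by
  decide

lemma fin3_third' : ∀ c x y t : Fin 3, c = x ∨ c = y ∨ x = y ∨ t = x ∨ t = y ∨ t = c := by decide


set_option linter.unusedSectionVars false

noncomputable section SwapSec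
open Classical

variable {V : Type*} [Finite V] {H : SimpleGraph V}

/-- proper partial edge coloring -/
def Proper3 (H : SimpleGraph V) (C : H.edgeSet → Fin 3) : Prop :=
  ∀ e f : H.edgeSet, e ≠ f → (∃ t, t ∈ (e : Sym2 V) ∧ t ∈ (f : Sym2 V)) → C e ≠ C f

variable (C : H.edgeSet → Fin 3) (α β : Fin 3)

def Stp (e f : H.edgeSet) : Prop :=
  e ≠ f ∧ (C f = α ∨ C f = β) ∧ ∃ t, t ∈ (e : Sym2 V) ∧ t ∈ (f : Sym2 V)

variable (e0 : H.edgeSet)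

def Rch (e : H.edgeSet) : Prop := Relation.ReflTransGen (Stp C α β) e0 e

lemma rch_color (h0 : C e0 = α ∨ C e0 = β) {e} (h : Rch C α β e0 e) :
    C e = α ∨ C e = β := by
  induction h with
  | refl => exact h0
  | tail _ hstep _ => exact hstep.2.1

lemma rch_tail {e f} (h : Rch C α β e0 e) (hef : e ≠ f) (hcf : C f = α ∨ C f = β)
    (hsh : ∃ t, t ∈ (e : Sym2 V) ∧ t ∈ (f : Sym2 V)) : Rch C α β e0 f :=
  h.tail ⟨hef, hcf, hsh⟩

def sw (a : Fin 3) : Fin 3 := if a = α then β else if a = β then α else a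

lemma sw_invol : ∀ α β a : Fin 3, sw α β (sw α β a) = a := by decide

lemma sw_inj {α β a b : Fin 3} (h : sw α β a = sw α β b) : a = b := by
  have := congrArg (sw α β) h
  rwa [sw_invol, sw_invol] at this

lemma sw_mem : ∀ {α β a : Fin 3}, (a = α ∨ a = β) → (sw α β a = α ∨ sw α β a = β) := by decide

lemma sw_alpha : ∀ α β : Fin 3, sw α β α = β := by decide

lemma sw_ne : ∀ {α β a : Fin 3}, a ≠ α → a ≠ β → sw α β a = a := by decide

def swapC (e : H.edgeSet) : Fin 3 := if Rch C α β e0 e then sw α β (C e) else C e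

lemma swapC_of {e} (h : Rch C α β e0 e) : swapC C α β e0 e = sw α β (C e) := if_pos h

lemma swapC_of_not {e} (h : ¬ Rch C α β e0 e) : swapC C α β e0 e = C e := if_neg h

lemma rch_of_ne {e} (h : swapC C α β e0 e ≠ C e) : Rch C α β e0 e := by
  by_contra hc; exact h (swapC_of_not C α β e0 hc)

lemma swap_proper (hC : Proper3 H C) (h0 : C e0 = α ∨ C e0 = β) :
    Proper3 H (swapC C α β e0) := by
  intro e f hne hsh
  have hCne := hC e f hne hsh
  by_cases he : Rch C α β e0 e <;> by_cases hf : Rch C α β e0 f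
  · rw [swapC_of C α β e0 he, swapC_of C α β e0 hf]
    exact fun h => hCne (sw_inj h)
  · rw [swapC_of C α β e0 he, swapC_of_not C α β e0 hf]
    intro h
    have hce : C e = α ∨ C e = β := rch_color C α β e0 h0 he
    have : C f = α ∨ C f = β := h ▸ sw_mem hce
    exact hf (rch_tail C α β e0 he hne this hsh)
  · rw [swapC_of_not C α β e0 he, swapC_of C α β e0 hf]
    intro h
    have hcf : C f = α ∨ C f = β := rch_color C α β e0 h0 hf
    have : C e = α ∨ C e = β := h.symm ▸ sw_mem hcf
    obtain ⟨t, ht1, ht2⟩ := hsh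
    exact he (rch_tail C α β e0 hf (Ne.symm hne) this ⟨t, ht2, ht1⟩)
  · rw [swapC_of_not C α β e0 he, swapC_of_not C α β e0 hf]; exact hCne

end SwapSec


section Leaf
variable {V : Type*} [Finite V] [Nonempty V] {H : SimpleGraph V}

lemma edge_vertexSet_pair (e : H.edgeSet) :
    ∃ a b : V, a ≠ b ∧ {v : V | v ∈ (e : Sym2 V)} = {a, b} := by
  obtain ⟨s, hs⟩ := e
  induction s using Sym2.ind with
  | _ a b =>
    refine ⟨a, b, ?_, ?_⟩
    · intro h; exact H.not_isDiag_of_mem_edgeSet hs (by simp [h, Sym2.isDiag_iff_proj_eq])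
    · ext v; simp [Sym2.mem_iff]

lemma edge_vertexSet_ncard (e : H.edgeSet) : {v : V | v ∈ (e : Sym2 V)}.ncard = 2 := by
  obtain ⟨a, b, hab, h⟩ := edge_vertexSet_pair e
  rw [h]; exact Set.ncard_pair hab

variable (C : H.edgeSet → Fin 3) (α β : Fin 3) (e0 : H.edgeSet)

def VSet (S : Set H.edgeSet) : Set V := {v | ∃ e ∈ S, v ∈ (e : Sym2 V)}

def RnSet : ℕ → Set H.edgeSet
  | 0 => {e0}
  | n + 1 => RnSet n ∪ {f | ∃ e ∈ RnSet n, Stp C α β e f}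

lemma e0_mem_RnSet : ∀ n, e0 ∈ RnSet C α β e0 n
  | 0 => rfl
  | n + 1 => Or.inl (e0_mem_RnSet n)

lemma RnSet_sub_K : ∀ n, ∀ e ∈ RnSet C α β e0 n, Rch C α β e0 e := by
  intro n
  induction n with
  | zero => intro e he; rw [Set.mem_singleton_iff.mp he]; exact Relation.ReflTransGen.refl
  | succ n ih =>
    rintro e (he | ⟨f, hf, hstep⟩)
    · exact ih e he
    · exact (ih f hf).tail hstep

lemma vset_card_bound : ∀ n, (VSet (RnSet C α β e0 n)).ncard ≤ (RnSet C α β e0 n).ncard + 1 := by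
  intro n
  induction n with
  | zero =>
    have h1 : VSet (RnSet C α β e0 0) = {v : V | v ∈ (e0 : Sym2 V)} := by
      ext v; constructor
      · rintro ⟨e, he, hv⟩; rw [Set.mem_singleton_iff.mp he] at hv; exact hv
      · intro hv; exact ⟨e0, rfl, hv⟩
    rw [h1, edge_vertexSet_ncard]
    have : (RnSet C α β e0 0).ncard = 1 := Set.ncard_singleton e0
    omega
  | succ n ih =>
    set S := RnSet C α β e0 n with hS
    set D := {f | ∃ e ∈ S, Stp C α β e f} \ S with hD
    have hsplit : RnSet C α β e0 (n + 1) = S ∪ D := by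
      rw [hD]; show S ∪ _ = _
      ext f
      simp only [Set.mem_union, Set.mem_diff, Set.mem_setOf_eq]
      tauto
    -- choice of "new vertex" for each f in D
    have hgf : ∀ f ∈ D, ∃ u : V, ∀ v ∈ (f : Sym2 V), v ∈ VSet S ∨ v = u := by
      rintro f ⟨⟨e, he, hne, hcol, t, hte, htf⟩, _⟩
      have htS : t ∈ VSet S := ⟨e, he, hte⟩
      obtain ⟨s, hs⟩ := f
      simp only at htf ⊢
      induction s using Sym2.ind with
      | _ a b =>
        rcases Sym2.mem_iff.mp htf with h | h
        · subst h
          exact ⟨b, fun v hv => by rcases Sym2.mem_iff.mp hv with h | h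
                                   · exact Or.inl (h ▸ htS)
                                   · exact Or.inr h⟩
        · subst h
          exact ⟨a, fun v hv => by rcases Sym2.mem_iff.mp hv with h | h
                                   · exact Or.inr h
                                   · exact Or.inl (h ▸ htS)⟩
    let g : H.edgeSet → V := fun f => if h : f ∈ D then (hgf f h).choose else Classical.arbitrary V
    have himg : VSet (S ∪ D) ⊆ VSet S ∪ g '' D := by
      rintro v ⟨f, hf, hv⟩
      rcases hf with hf | hf
      · exact Or.inl ⟨f, hf, hv⟩
      · have hspec := (hgf f hf).choose_spec v hv
        rcases hspec with h | h
        · exact Or.inl h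
        · refine Or.inr ⟨f, hf, ?_⟩
          simp only [g, dif_pos hf]
          exact h.symm
    have hdisj : Disjoint S D := Set.disjoint_sdiff_right
    have hcard1 : (RnSet C α β e0 (n+1)).ncard = S.ncard + D.ncard := by
      rw [hsplit]; exact Set.ncard_union_eq hdisj (Set.toFinite _) (Set.toFinite _)
    have hc2 : (VSet (S ∪ D)).ncard ≤ (VSet S).ncard + (g '' D).ncard := by
      calc (VSet (S ∪ D)).ncard ≤ (VSet S ∪ g '' D).ncard :=
            Set.ncard_le_ncard himg (Set.toFinite _)
        _ ≤ _ := Set.ncard_union_le _ _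
    have hc3 : (g '' D).ncard ≤ D.ncard := Set.ncard_image_le (Set.toFinite _)
    have hcard1' : (S ∪ D).ncard = S.ncard + D.ncard := hsplit ▸ hcard1
    rw [hsplit]
    omega

lemma exists_stable : ∃ n, RnSet C α β e0 (n + 1) = RnSet C α β e0 n := by
  by_contra hc
  push_neg at hc
  have grow : ∀ n, n + 1 ≤ (RnSet C α β e0 n).ncard := by
    intro n
    induction n with
    | zero => rw [show RnSet C α β e0 0 = {e0} from rfl, Set.ncard_singleton]
    | succ n ih =>
      have hsub : RnSet C α β e0 n ⊆ RnSet C α β e0 (n + 1) := Set.subset_union_left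
      have hss : RnSet C α β e0 n ⊂ RnSet C α β e0 (n + 1) :=
        HasSubset.Subset.ssubset_of_ne hsub (Ne.symm (hc n))
      have := Set.ncard_lt_ncard hss (Set.toFinite _)
      omega
  have hbound : (RnSet C α β e0 (Nat.card H.edgeSet)).ncard ≤ Nat.card H.edgeSet := by
    rw [← Set.ncard_univ]
    exact Set.ncard_le_ncard (Set.subset_univ _) (Set.toFinite _)
  have := grow (Nat.card H.edgeSet)
  omega

lemma K_eq_Rn : ∃ n, {e : H.edgeSet | Rch C α β e0 e} = RnSet C α β e0 n := by
  obtain ⟨n, hn⟩ := exists_stable C α β e0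
  refine ⟨n, Set.Subset.antisymm ?_ (fun e he => RnSet_sub_K C α β e0 n e he)⟩
  intro e (he : Rch C α β e0 e)
  induction he with
  | refl => exact e0_mem_RnSet C α β e0 n
  | tail hr hstep ih =>
    have : _ ∈ RnSet C α β e0 (n + 1) := Or.inr ⟨_, ih, hstep⟩
    rwa [hn] at this

lemma K_vset_bound :
    (VSet {e : H.edgeSet | Rch C α β e0 e}).ncard ≤ ({e : H.edgeSet | Rch C α β e0 e}).ncard + 1 := by
  obtain ⟨n, hn⟩ := K_eq_Rn C α β e0
  rw [hn]
  exact vset_card_bound C α β e0 n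

/-- The three-leaf contradiction: a Kempe component cannot have three distinct
degree-one vertices. -/
lemma three_leaf (hC : Proper3 H C) (hab : α ≠ β) (h0 : C e0 = α ∨ C e0 = β)
    (u1 u2 u3 : V) (E1 E2 E3 : H.edgeSet)
    (h12 : u1 ≠ u2) (h13 : u1 ≠ u3) (h23 : u2 ≠ u3)
    (hu1 : u1 ∈ (E1 : Sym2 V)) (hu2 : u2 ∈ (E2 : Sym2 V)) (hu3 : u3 ∈ (E3 : Sym2 V))
    (hr1 : Rch C α β e0 E1) (hr2 : Rch C α β e0 E2) (hr3 : Rch C α β e0 E3)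
    (honly1 : ∀ f : H.edgeSet, u1 ∈ (f : Sym2 V) → (C f = α ∨ C f = β) → f = E1)
    (honly2 : ∀ f : H.edgeSet, u2 ∈ (f : Sym2 V) → (C f = α ∨ C f = β) → f = E2)
    (honly3 : ∀ f : H.edgeSet, u3 ∈ (f : Sym2 V) → (C f = α ∨ C f = β) → f = E3) :
    False := by
  set K : Set H.edgeSet := {e | Rch C α β e0 e} with hK
  have hKfin : K.Finite := Set.toFinite _
  have hVfin : (VSet K).Finite := Set.toFinite _
  set KF := hKfin.toFinset with hKF
  set VF := hVfin.toFinset with hVF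
  have hmemKF : ∀ e : H.edgeSet, e ∈ KF ↔ Rch C α β e0 e := by
    intro e; rw [hKF, Set.Finite.mem_toFinset]; exact Iff.rfl
  have hmemVF : ∀ v : V, v ∈ VF ↔ ∃ e ∈ K, v ∈ (e : Sym2 V) := by
    intro v; rw [hVF, Set.Finite.mem_toFinset]; exact Iff.rfl
  -- handshake
  have hhand : ∑ v ∈ VF, (KF.filter (fun e : H.edgeSet => v ∈ (e : Sym2 V))).card = 2 * KF.card := by
    have h1 : ∀ v, (KF.filter (fun e : H.edgeSet => v ∈ (e : Sym2 V))).card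
        = ∑ e ∈ KF, if v ∈ (e : Sym2 V) then 1 else 0 := fun v => Finset.card_filter _ _
    have h2 : ∀ e ∈ KF, (VF.filter (fun v : V => v ∈ (e : Sym2 V))).card = 2 := by
      intro e he
      obtain ⟨a, b, hne2, hpair⟩ := edge_vertexSet_pair e
      have hsub : ∀ v, v ∈ (e : Sym2 V) → v ∈ VF := by
        intro v hv; rw [hmemVF]; exact ⟨e, (hmemKF e).mp he, hv⟩
      have : VF.filter (fun v : V => v ∈ (e : Sym2 V)) = {a, b} := by
        ext v
        simp only [Finset.mem_filter, Finset.mem_insert, Finset.mem_singleton]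
        constructor
        · rintro ⟨-, hv⟩
          have : v ∈ ({a, b} : Set V) := hpair ▸ hv
          simpa using this
        · rintro (rfl | rfl)
          · have hv : v ∈ (e : Sym2 V) := by
              have : v ∈ ({v, b} : Set V) := by simp
              rw [← hpair] at this; exact this
            exact ⟨hsub v hv, hv⟩
          · have hv : v ∈ (e : Sym2 V) := by
              have : v ∈ ({a, v} : Set V) := by simp
              rw [← hpair] at this; exact this
            exact ⟨hsub v hv, hv⟩
      rw [this]
      exact Finset.card_eq_two.mpr ⟨a, b, hne2, rfl⟩
    calc ∑ v ∈ VF, (KF.filter (fun e : H.edgeSet => v ∈ (e : Sym2 V))).card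
        = ∑ v ∈ VF, ∑ e ∈ KF, if v ∈ (e : Sym2 V) then 1 else 0 := by
          exact Finset.sum_congr rfl (fun v _ => h1 v)
      _ = ∑ e ∈ KF, ∑ v ∈ VF, if v ∈ (e : Sym2 V) then 1 else 0 := Finset.sum_comm
      _ = ∑ e ∈ KF, (VF.filter (fun v : V => v ∈ (e : Sym2 V))).card := by
          exact Finset.sum_congr rfl (fun e _ => (Finset.card_filter _ _).symm)
      _ = ∑ _e ∈ KF, 2 := Finset.sum_congr rfl h2
      _ = 2 * KF.card := by rw [Finset.sum_const, smul_eq_mul, mul_comm]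
  -- degree bound
  have hdeg : ∀ v ∈ VF, (KF.filter (fun e : H.edgeSet => v ∈ (e : Sym2 V))).card ≤ 2 := by
    intro v _
    have : (KF.filter (fun e : H.edgeSet => v ∈ (e : Sym2 V))).card ≤ (Finset.univ : Finset Bool).card := by
      apply Finset.card_le_card_of_injOn (fun e => decide (C e = α))
      · intro e _; exact Finset.mem_univ _
      · intro e he f hf heq
        simp only [Finset.coe_filter, Set.mem_setOf_eq] at he hf
        have hce := rch_color C α β e0 h0 ((hmemKF e).mp he.1)
        have hcf := rch_color C α β e0 h0 ((hmemKF f).mp hf.1)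
        have hcc : C e = C f := by
          rcases hce with h | h <;> rcases hcf with h' | h' <;>
            simp [h, h'] at heq ⊢ <;> simp_all
        by_contra hne
        exact hC e f hne ⟨v, he.2, hf.2⟩ hcc
    simpa using this
  -- leaves have degree exactly 1
  have hleaf : ∀ (u : V) (E : H.edgeSet), u ∈ (E : Sym2 V) → Rch C α β e0 E →
      (∀ f : H.edgeSet, u ∈ (f : Sym2 V) → (C f = α ∨ C f = β) → f = E) →
      KF.filter (fun e : H.edgeSet => u ∈ (e : Sym2 V)) = {E} := by
    intro u E huE hrE honly
    ext f
    simp only [Finset.mem_filter, Finset.mem_singleton]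
    constructor
    · rintro ⟨hfK, huf⟩
      exact honly f huf (rch_color C α β e0 h0 ((hmemKF f).mp hfK))
    · rintro rfl
      exact ⟨(hmemKF f).mpr hrE, huE⟩
  have hu1V : u1 ∈ VF := (hmemVF u1).mpr ⟨E1, hr1, hu1⟩
  have hu2V : u2 ∈ VF := (hmemVF u2).mpr ⟨E2, hr2, hu2⟩
  have hu3V : u3 ∈ VF := (hmemVF u3).mpr ⟨E3, hr3, hu3⟩
  set U : Finset V := {u1, u2, u3} with hU
  have hUsub : U ⊆ VF := by
    intro v hv
    rw [hU] at hv
    simp only [Finset.mem_insert, Finset.mem_singleton] at hv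
    rcases hv with rfl | rfl | rfl <;> assumption
  have hUcard : U.card = 3 := by
    rw [hU]
    rw [Finset.card_insert_of_notMem (by simp [h12, h13]),
        Finset.card_insert_of_notMem (by simp [h23])]
    rfl
  have hsum_split : ∑ v ∈ VF \ U, (KF.filter (fun e : H.edgeSet => v ∈ (e : Sym2 V))).card
      + ∑ v ∈ U, (KF.filter (fun e : H.edgeSet => v ∈ (e : Sym2 V))).card = 2 * KF.card := by
    rw [← hhand]; exact Finset.sum_sdiff hUsub
  have hsumU : ∑ v ∈ U, (KF.filter (fun e : H.edgeSet => v ∈ (e : Sym2 V))).card = 3 := by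
    rw [hU]
    rw [Finset.sum_insert (by simp [h12, h13]), Finset.sum_insert (by simp [h23]),
        Finset.sum_singleton]
    rw [hleaf u1 E1 hu1 hr1 honly1, hleaf u2 E2 hu2 hr2 honly2, hleaf u3 E3 hu3 hr3 honly3]
    simp
  have hsumrest : ∑ v ∈ VF \ U, (KF.filter (fun e : H.edgeSet => v ∈ (e : Sym2 V))).card
      ≤ 2 * (VF \ U).card := by
    calc ∑ v ∈ VF \ U, (KF.filter (fun e : H.edgeSet => v ∈ (e : Sym2 V))).card
        ≤ ∑ _v ∈ VF \ U, 2 := Finset.sum_le_sum (fun v hv => hdeg v (Finset.mem_sdiff.mp hv).1)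
      _ = 2 * (VF \ U).card := by rw [Finset.sum_const, smul_eq_mul, mul_comm]
  have hcard_sdiff : (VF \ U).card = VF.card - 3 := by rw [Finset.card_sdiff_of_subset hUsub, hUcard]
  have hVle : VF.card ≤ KF.card + 1 := by
    have h1 := K_vset_bound C α β e0
    have h2 : (VSet K).ncard = VF.card := Set.ncard_eq_toFinset_card _ hVfin
    have h3 : K.ncard = KF.card := Set.ncard_eq_toFinset_card _ hKfin
    rw [← hK] at h1
    omega
  have hV3 : 3 ≤ VF.card := by
    calc 3 = U.card := hUcard.symm
    _ ≤ VF.card := Finset.card_le_card hUsub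
  omega

end Leaf


section Main
variable {V : Type} [Fintype V]

/-- The local configuration: a 4-cycle v1v2v3v4, pendant 2-neighbors v5,v6,v7 of
v2,v3,v4, third neighbor x of v1, and second neighbors p5,p6,p7 of v5,v6,v7. -/
structure Cfg (G : SimpleGraph V) (v1 v2 v3 v4 v5 v6 v7 x p5 p6 p7 : V) : Prop where
  d12 : v1 ≠ v2
  d13 : v1 ≠ v3
  d14 : v1 ≠ v4
  d15 : v1 ≠ v5
  d16 : v1 ≠ v6
  d17 : v1 ≠ v7
  d23 : v2 ≠ v3
  d24 : v2 ≠ v4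
  d25 : v2 ≠ v5
  d26 : v2 ≠ v6
  d27 : v2 ≠ v7
  d34 : v3 ≠ v4
  d35 : v3 ≠ v5
  d36 : v3 ≠ v6
  d37 : v3 ≠ v7
  d45 : v4 ≠ v5
  d46 : v4 ≠ v6
  d47 : v4 ≠ v7
  d56 : v5 ≠ v6
  d57 : v5 ≠ v7
  d67 : v6 ≠ v7
  xv1 : x ≠ v1
  xv2 : x ≠ v2
  xv3 : x ≠ v3
  xv4 : x ≠ v4
  p5v2 : p5 ≠ v2
  p5v3 : p5 ≠ v3
  p5v4 : p5 ≠ v4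
  p5v5 : p5 ≠ v5
  p6v2 : p6 ≠ v2
  p6v3 : p6 ≠ v3
  p6v4 : p6 ≠ v4
  p6v6 : p6 ≠ v6
  p7v2 : p7 ≠ v2
  p7v3 : p7 ≠ v3
  p7v4 : p7 ≠ v4
  p7v7 : p7 ≠ v7
  n1 : G.neighborSet v1 = {v2, v4, x}
  n2 : G.neighborSet v2 = {v1, v3, v5}
  n3 : G.neighborSet v3 = {v2, v4, v6}
  n4 : G.neighborSet v4 = {v1, v3, v7}
  n5 : G.neighborSet v5 = {v2, p5}
  n6 : G.neighborSet v6 = {v3, p6}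
  n7 : G.neighborSet v7 = {v4, p7}

variable {G : SimpleGraph V} {v1 v2 v3 v4 v5 v6 v7 x p5 p6 p7 : V}

lemma edge_eq_of_mem {f : Sym2 V} (hf : f ∈ G.edgeSet) {t : V} (ht : t ∈ f) :
    ∃ u, u ∈ G.neighborSet t ∧ f = s(t, u) := by
  induction f using Sym2.ind with
  | _ a b =>
    rw [SimpleGraph.mem_edgeSet] at hf
    rcases Sym2.mem_iff.mp ht with rfl | rfl
    · exact ⟨b, hf, rfl⟩
    · exact ⟨a, hf.symm, Sym2.eq_swap⟩

lemma sne {a b c d : V} (h1 : a = c → b = d → False) (h2 : a = d → b = c → False) :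
    s(a, b) ≠ s(c, d) := fun h => by
  rcases Sym2.eq_iff.mp h with ⟨ha, hb⟩ | ⟨ha, hb⟩
  · exact h1 ha hb
  · exact h2 ha hb

namespace Cfg
variable (hc : Cfg G v1 v2 v3 v4 v5 v6 v7 x p5 p6 p7)
include hc

lemma adj12 : G.Adj v1 v2 := by have : v2 ∈ G.neighborSet v1 := by rw [hc.n1]; simp
                                exact this
lemma adj23 : G.Adj v2 v3 := by have : v3 ∈ G.neighborSet v2 := by rw [hc.n2]; simp
                                exact this
lemma adj34 : G.Adj v3 v4 := by have : v4 ∈ G.neighborSet v3 := by rw [hc.n3]; simp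
                                exact this
lemma adj41 : G.Adj v4 v1 := by have : v1 ∈ G.neighborSet v4 := by rw [hc.n4]; simp
                                exact this
lemma adj25 : G.Adj v2 v5 := by have : v5 ∈ G.neighborSet v2 := by rw [hc.n2]; simp
                                exact this
lemma adj36 : G.Adj v3 v6 := by have : v6 ∈ G.neighborSet v3 := by rw [hc.n3]; simp
                                exact this
lemma adj47 : G.Adj v4 v7 := by have : v7 ∈ G.neighborSet v4 := by rw [hc.n4]; simp
                                exact this
lemma adj1x : G.Adj v1 x := by have : x ∈ G.neighborSet v1 := by rw [hc.n1]; simp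
                               exact this
lemma adj5p : G.Adj v5 p5 := by have : p5 ∈ G.neighborSet v5 := by rw [hc.n5]; simp
                                exact this
lemma adj6p : G.Adj v6 p6 := by have : p6 ∈ G.neighborSet v6 := by rw [hc.n6]; simp
                                exact this
lemma adj7p : G.Adj v7 p7 := by have : p7 ∈ G.neighborSet v7 := by rw [hc.n7]; simp
                                exact this

/-- edges of `G` at each configuration vertex -/
lemma atG1 {f : Sym2 V} (hf : f ∈ G.edgeSet) (ht : v1 ∈ f) :
    f = s(v1, v2) ∨ f = s(v4, v1) ∨ f = s(v1, x) := by
  obtain ⟨u, hu, rfl⟩ := edge_eq_of_mem hf ht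
  rw [hc.n1] at hu
  rcases hu with rfl | rfl | rfl
  · exact Or.inl rfl
  · exact Or.inr (Or.inl Sym2.eq_swap)
  · exact Or.inr (Or.inr rfl)

lemma atG2 {f : Sym2 V} (hf : f ∈ G.edgeSet) (ht : v2 ∈ f) :
    f = s(v1, v2) ∨ f = s(v2, v3) ∨ f = s(v2, v5) := by
  obtain ⟨u, hu, rfl⟩ := edge_eq_of_mem hf ht
  rw [hc.n2] at hu
  rcases hu with rfl | rfl | rfl
  · exact Or.inl Sym2.eq_swap
  · exact Or.inr (Or.inl rfl)
  · exact Or.inr (Or.inr rfl)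

lemma atG3 {f : Sym2 V} (hf : f ∈ G.edgeSet) (ht : v3 ∈ f) :
    f = s(v2, v3) ∨ f = s(v3, v4) ∨ f = s(v3, v6) := by
  obtain ⟨u, hu, rfl⟩ := edge_eq_of_mem hf ht
  rw [hc.n3] at hu
  rcases hu with rfl | rfl | rfl
  · exact Or.inl Sym2.eq_swap
  · exact Or.inr (Or.inl rfl)
  · exact Or.inr (Or.inr rfl)

lemma atG4 {f : Sym2 V} (hf : f ∈ G.edgeSet) (ht : v4 ∈ f) :
    f = s(v4, v1) ∨ f = s(v3, v4) ∨ f = s(v4, v7) := by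
  obtain ⟨u, hu, rfl⟩ := edge_eq_of_mem hf ht
  rw [hc.n4] at hu
  rcases hu with rfl | rfl | rfl
  · exact Or.inl rfl
  · exact Or.inr (Or.inl Sym2.eq_swap)
  · exact Or.inr (Or.inr rfl)

lemma atG5 {f : Sym2 V} (hf : f ∈ G.edgeSet) (ht : v5 ∈ f) :
    f = s(v2, v5) ∨ f = s(v5, p5) := by
  obtain ⟨u, hu, rfl⟩ := edge_eq_of_mem hf ht
  rw [hc.n5] at hu
  rcases hu with rfl | rfl
  · exact Or.inl Sym2.eq_swap
  · exact Or.inr rfl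

lemma atG6 {f : Sym2 V} (hf : f ∈ G.edgeSet) (ht : v6 ∈ f) :
    f = s(v3, v6) ∨ f = s(v6, p6) := by
  obtain ⟨u, hu, rfl⟩ := edge_eq_of_mem hf ht
  rw [hc.n6] at hu
  rcases hu with rfl | rfl
  · exact Or.inl Sym2.eq_swap
  · exact Or.inr rfl

lemma atG7 {f : Sym2 V} (hf : f ∈ G.edgeSet) (ht : v7 ∈ f) :
    f = s(v4, v7) ∨ f = s(v7, p7) := by
  obtain ⟨u, hu, rfl⟩ := edge_eq_of_mem hf ht
  rw [hc.n7] at hu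
  rcases hu with rfl | rfl
  · exact Or.inl Sym2.eq_swap
  · exact Or.inr rfl



lemma nE1E2 : s(v1, v2) ≠ s(v3, v4) := sne (fun h _ => (fun h => hc.d13 h) h) (fun h _ => (fun h => hc.d14 h) h)
lemma nE1E3 : s(v1, v2) ≠ s(v4, v1) := sne (fun h _ => (fun h => hc.d14 h) h) (fun _ h => (fun h => hc.d24 h) h)
lemma nE1E4 : s(v1, v2) ≠ s(v2, v5) := sne (fun h _ => (fun h => hc.d12 h) h) (fun h _ => (fun h => hc.d15 h) h)
lemma nE1E5 : s(v1, v2) ≠ s(v3, v6) := sne (fun h _ => (fun h => hc.d13 h) h) (fun h _ => (fun h => hc.d16 h) h)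
lemma nE1E6 : s(v1, v2) ≠ s(v4, v7) := sne (fun h _ => (fun h => hc.d14 h) h) (fun h _ => (fun h => hc.d17 h) h)
lemma nE1E7 : s(v1, v2) ≠ s(v2, v3) := sne (fun h _ => (fun h => hc.d12 h) h) (fun h _ => (fun h => hc.d13 h) h)
lemma nE2E3 : s(v3, v4) ≠ s(v4, v1) := sne (fun h _ => (fun h => hc.d34 h) h) (fun h _ => (fun h => hc.d13 h.symm) h)
lemma nE2E4 : s(v3, v4) ≠ s(v2, v5) := sne (fun h _ => (fun h => hc.d23 h.symm) h) (fun h _ => (fun h => hc.d35 h) h)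
lemma nE2E5 : s(v3, v4) ≠ s(v3, v6) := sne (fun _ h => (fun h => hc.d46 h) h) (fun h _ => (fun h => hc.d36 h) h)
lemma nE2E6 : s(v3, v4) ≠ s(v4, v7) := sne (fun h _ => (fun h => hc.d34 h) h) (fun h _ => (fun h => hc.d37 h) h)
lemma nE2E7 : s(v3, v4) ≠ s(v2, v3) := sne (fun h _ => (fun h => hc.d23 h.symm) h) (fun _ h => (fun h => hc.d24 h.symm) h)
lemma nE3E4 : s(v4, v1) ≠ s(v2, v5) := sne (fun h _ => (fun h => hc.d24 h.symm) h) (fun h _ => (fun h => hc.d45 h) h)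
lemma nE3E5 : s(v4, v1) ≠ s(v3, v6) := sne (fun h _ => (fun h => hc.d34 h.symm) h) (fun h _ => (fun h => hc.d46 h) h)
lemma nE3E6 : s(v4, v1) ≠ s(v4, v7) := sne (fun _ h => (fun h => hc.d17 h) h) (fun h _ => (fun h => hc.d47 h) h)
lemma nE3E7 : s(v4, v1) ≠ s(v2, v3) := sne (fun h _ => (fun h => hc.d24 h.symm) h) (fun h _ => (fun h => hc.d34 h.symm) h)
lemma nE4E5 : s(v2, v5) ≠ s(v3, v6) := sne (fun h _ => (fun h => hc.d23 h) h) (fun h _ => (fun h => hc.d26 h) h)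
lemma nE4E6 : s(v2, v5) ≠ s(v4, v7) := sne (fun h _ => (fun h => hc.d24 h) h) (fun h _ => (fun h => hc.d27 h) h)
lemma nE4E7 : s(v2, v5) ≠ s(v2, v3) := sne (fun _ h => (fun h => hc.d35 h.symm) h) (fun h _ => (fun h => hc.d23 h) h)
lemma nE5E6 : s(v3, v6) ≠ s(v4, v7) := sne (fun h _ => (fun h => hc.d34 h) h) (fun h _ => (fun h => hc.d37 h) h)
lemma nE5E7 : s(v3, v6) ≠ s(v2, v3) := sne (fun h _ => (fun h => hc.d23 h.symm) h) (fun _ h => (fun h => hc.d26 h.symm) h)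
lemma nE6E7 : s(v4, v7) ≠ s(v2, v3) := sne (fun h _ => (fun h => hc.d24 h.symm) h) (fun h _ => (fun h => hc.d34 h.symm) h)
lemma nA1E1 : s(v1, x) ≠ s(v1, v2) := sne (fun _ h => (fun h => hc.xv2 h) h) (fun h _ => (fun h => hc.d12 h) h)
lemma nA1E2 : s(v1, x) ≠ s(v3, v4) := sne (fun h _ => (fun h => hc.d13 h) h) (fun h _ => (fun h => hc.d14 h) h)
lemma nA1E3 : s(v1, x) ≠ s(v4, v1) := sne (fun h _ => (fun h => hc.d14 h) h) (fun _ h => (fun h => hc.xv4 h) h)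
lemma nA1E4 : s(v1, x) ≠ s(v2, v5) := sne (fun h _ => (fun h => hc.d12 h) h) (fun h _ => (fun h => hc.d15 h) h)
lemma nA1E5 : s(v1, x) ≠ s(v3, v6) := sne (fun h _ => (fun h => hc.d13 h) h) (fun h _ => (fun h => hc.d16 h) h)
lemma nA1E6 : s(v1, x) ≠ s(v4, v7) := sne (fun h _ => (fun h => hc.d14 h) h) (fun h _ => (fun h => hc.d17 h) h)
lemma nA1E7 : s(v1, x) ≠ s(v2, v3) := sne (fun h _ => (fun h => hc.d12 h) h) (fun h _ => (fun h => hc.d13 h) h)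
lemma nA5E1 : s(v5, p5) ≠ s(v1, v2) := sne (fun h _ => (fun h => hc.d15 h.symm) h) (fun h _ => (fun h => hc.d25 h.symm) h)
lemma nA5E2 : s(v5, p5) ≠ s(v3, v4) := sne (fun h _ => (fun h => hc.d35 h.symm) h) (fun h _ => (fun h => hc.d45 h.symm) h)
lemma nA5E3 : s(v5, p5) ≠ s(v4, v1) := sne (fun h _ => (fun h => hc.d45 h.symm) h) (fun h _ => (fun h => hc.d15 h.symm) h)
lemma nA5E4 : s(v5, p5) ≠ s(v2, v5) := sne (fun h _ => (fun h => hc.d25 h.symm) h) (fun _ h => (fun h => hc.p5v2 h) h)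
lemma nA5E5 : s(v5, p5) ≠ s(v3, v6) := sne (fun h _ => (fun h => hc.d35 h.symm) h) (fun h _ => (fun h => hc.d56 h) h)
lemma nA5E6 : s(v5, p5) ≠ s(v4, v7) := sne (fun h _ => (fun h => hc.d45 h.symm) h) (fun h _ => (fun h => hc.d57 h) h)
lemma nA5E7 : s(v5, p5) ≠ s(v2, v3) := sne (fun h _ => (fun h => hc.d25 h.symm) h) (fun h _ => (fun h => hc.d35 h.symm) h)
lemma nA6E1 : s(v6, p6) ≠ s(v1, v2) := sne (fun h _ => (fun h => hc.d16 h.symm) h) (fun h _ => (fun h => hc.d26 h.symm) h)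
lemma nA6E2 : s(v6, p6) ≠ s(v3, v4) := sne (fun h _ => (fun h => hc.d36 h.symm) h) (fun h _ => (fun h => hc.d46 h.symm) h)
lemma nA6E3 : s(v6, p6) ≠ s(v4, v1) := sne (fun h _ => (fun h => hc.d46 h.symm) h) (fun h _ => (fun h => hc.d16 h.symm) h)
lemma nA6E4 : s(v6, p6) ≠ s(v2, v5) := sne (fun h _ => (fun h => hc.d26 h.symm) h) (fun h _ => (fun h => hc.d56 h.symm) h)
lemma nA6E5 : s(v6, p6) ≠ s(v3, v6) := sne (fun h _ => (fun h => hc.d36 h.symm) h) (fun _ h => (fun h => hc.p6v3 h) h)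
lemma nA6E6 : s(v6, p6) ≠ s(v4, v7) := sne (fun h _ => (fun h => hc.d46 h.symm) h) (fun h _ => (fun h => hc.d67 h) h)
lemma nA6E7 : s(v6, p6) ≠ s(v2, v3) := sne (fun h _ => (fun h => hc.d26 h.symm) h) (fun h _ => (fun h => hc.d36 h.symm) h)
lemma nA7E1 : s(v7, p7) ≠ s(v1, v2) := sne (fun h _ => (fun h => hc.d17 h.symm) h) (fun h _ => (fun h => hc.d27 h.symm) h)
lemma nA7E2 : s(v7, p7) ≠ s(v3, v4) := sne (fun h _ => (fun h => hc.d37 h.symm) h) (fun h _ => (fun h => hc.d47 h.symm) h)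
lemma nA7E3 : s(v7, p7) ≠ s(v4, v1) := sne (fun h _ => (fun h => hc.d47 h.symm) h) (fun h _ => (fun h => hc.d17 h.symm) h)
lemma nA7E4 : s(v7, p7) ≠ s(v2, v5) := sne (fun h _ => (fun h => hc.d27 h.symm) h) (fun h _ => (fun h => hc.d57 h.symm) h)
lemma nA7E5 : s(v7, p7) ≠ s(v3, v6) := sne (fun h _ => (fun h => hc.d37 h.symm) h) (fun h _ => (fun h => hc.d67 h.symm) h)
lemma nA7E6 : s(v7, p7) ≠ s(v4, v7) := sne (fun h _ => (fun h => hc.d47 h.symm) h) (fun _ h => (fun h => hc.p7v4 h) h)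
lemma nA7E7 : s(v7, p7) ≠ s(v2, v3) := sne (fun h _ => (fun h => hc.d27 h.symm) h) (fun h _ => (fun h => hc.d37 h.symm) h)

/-! ### membership of the special edges in `G` and in the deleted graph -/

lemma mGE1 : s(v1, v2) ∈ G.edgeSet := hc.adj12
lemma mGE2 : s(v3, v4) ∈ G.edgeSet := hc.adj34
lemma mGE3 : s(v4, v1) ∈ G.edgeSet := hc.adj41
lemma mGE4 : s(v2, v5) ∈ G.edgeSet := hc.adj25
lemma mGE5 : s(v3, v6) ∈ G.edgeSet := hc.adj36
lemma mGE6 : s(v4, v7) ∈ G.edgeSet := hc.adj47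
lemma mGE7 : s(v2, v3) ∈ G.edgeSet := hc.adj23
lemma mGA1 : s(v1, x) ∈ G.edgeSet := hc.adj1x
lemma mGA5 : s(v5, p5) ∈ G.edgeSet := hc.adj5p
lemma mGA6 : s(v6, p6) ∈ G.edgeSet := hc.adj6p
lemma mGA7 : s(v7, p7) ∈ G.edgeSet := hc.adj7p

lemma mE1 : s(v1, v2) ∈ (G.deleteEdges {s(v2, v3)}).edgeSet := by
  rw [SimpleGraph.edgeSet_deleteEdges]; exact ⟨hc.mGE1, by simpa using hc.nE1E7⟩
lemma mE2 : s(v3, v4) ∈ (G.deleteEdges {s(v2, v3)}).edgeSet := by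
  rw [SimpleGraph.edgeSet_deleteEdges]; exact ⟨hc.mGE2, by simpa using hc.nE2E7⟩
lemma mE3 : s(v4, v1) ∈ (G.deleteEdges {s(v2, v3)}).edgeSet := by
  rw [SimpleGraph.edgeSet_deleteEdges]; exact ⟨hc.mGE3, by simpa using hc.nE3E7⟩
lemma mE4 : s(v2, v5) ∈ (G.deleteEdges {s(v2, v3)}).edgeSet := by
  rw [SimpleGraph.edgeSet_deleteEdges]; exact ⟨hc.mGE4, by simpa using hc.nE4E7⟩
lemma mE5 : s(v3, v6) ∈ (G.deleteEdges {s(v2, v3)}).edgeSet := by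
  rw [SimpleGraph.edgeSet_deleteEdges]; exact ⟨hc.mGE5, by simpa using hc.nE5E7⟩
lemma mE6 : s(v4, v7) ∈ (G.deleteEdges {s(v2, v3)}).edgeSet := by
  rw [SimpleGraph.edgeSet_deleteEdges]; exact ⟨hc.mGE6, by simpa using hc.nE6E7⟩
lemma mA1 : s(v1, x) ∈ (G.deleteEdges {s(v2, v3)}).edgeSet := by
  rw [SimpleGraph.edgeSet_deleteEdges]; exact ⟨hc.mGA1, by simpa using hc.nA1E7⟩
lemma mA5 : s(v5, p5) ∈ (G.deleteEdges {s(v2, v3)}).edgeSet := by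
  rw [SimpleGraph.edgeSet_deleteEdges]; exact ⟨hc.mGA5, by simpa using hc.nA5E7⟩
lemma mA6 : s(v6, p6) ∈ (G.deleteEdges {s(v2, v3)}).edgeSet := by
  rw [SimpleGraph.edgeSet_deleteEdges]; exact ⟨hc.mGA6, by simpa using hc.nA6E7⟩
lemma mA7 : s(v7, p7) ∈ (G.deleteEdges {s(v2, v3)}).edgeSet := by
  rw [SimpleGraph.edgeSet_deleteEdges]; exact ⟨hc.mGA7, by simpa using hc.nA7E7⟩

/-! ### edges of the deleted graph at each vertex -/

lemma sub_del {f : Sym2 V} (hf : f ∈ (G.deleteEdges {s(v2, v3)}).edgeSet) :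
    f ∈ G.edgeSet ∧ f ≠ s(v2, v3) := by
  rw [SimpleGraph.edgeSet_deleteEdges] at hf
  exact ⟨hf.1, by simpa using hf.2⟩

lemma atd1 {f : Sym2 V} (hf : f ∈ (G.deleteEdges {s(v2, v3)}).edgeSet) (ht : v1 ∈ f) :
    f = s(v1, v2) ∨ f = s(v4, v1) ∨ f = s(v1, x) := hc.atG1 (hc.sub_del hf).1 ht

lemma atd2 {f : Sym2 V} (hf : f ∈ (G.deleteEdges {s(v2, v3)}).edgeSet) (ht : v2 ∈ f) :
    f = s(v1, v2) ∨ f = s(v2, v5) := by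
  rcases hc.atG2 (hc.sub_del hf).1 ht with h | h | h
  · exact Or.inl h
  · exact absurd h (hc.sub_del hf).2
  · exact Or.inr h

lemma atd3 {f : Sym2 V} (hf : f ∈ (G.deleteEdges {s(v2, v3)}).edgeSet) (ht : v3 ∈ f) :
    f = s(v3, v4) ∨ f = s(v3, v6) := by
  rcases hc.atG3 (hc.sub_del hf).1 ht with h | h | h
  · exact absurd h (hc.sub_del hf).2
  · exact Or.inl h
  · exact Or.inr h

lemma atd4 {f : Sym2 V} (hf : f ∈ (G.deleteEdges {s(v2, v3)}).edgeSet) (ht : v4 ∈ f) :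
    f = s(v4, v1) ∨ f = s(v3, v4) ∨ f = s(v4, v7) := hc.atG4 (hc.sub_del hf).1 ht

lemma atd5 {f : Sym2 V} (hf : f ∈ (G.deleteEdges {s(v2, v3)}).edgeSet) (ht : v5 ∈ f) :
    f = s(v2, v5) ∨ f = s(v5, p5) := hc.atG5 (hc.sub_del hf).1 ht

lemma atd6 {f : Sym2 V} (hf : f ∈ (G.deleteEdges {s(v2, v3)}).edgeSet) (ht : v6 ∈ f) :
    f = s(v3, v6) ∨ f = s(v6, p6) := hc.atG6 (hc.sub_del hf).1 ht

lemma atd7 {f : Sym2 V} (hf : f ∈ (G.deleteEdges {s(v2, v3)}).edgeSet) (ht : v7 ∈ f) :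
    f = s(v4, v7) ∨ f = s(v7, p7) := hc.atG7 (hc.sub_del hf).1 ht


/-- If the seven special edges can be recolored consistently with the rest of a
proper 3-coloring of `G - v2v3`, then `G` is 3-edge-colorable. -/
theorem region (D : (G.deleteEdges {s(v2, v3)}).edgeSet → Fin 3)
    (hD : Proper3 (G.deleteEdges {s(v2, v3)}) D)
    (f1 f2 f3 f4 f5 f6 f7 : Fin 3)
    (h13 : f1 ≠ f3) (h1a : f1 ≠ D ⟨s(v1, x), hc.mA1⟩) (h3a : f3 ≠ D ⟨s(v1, x), hc.mA1⟩)
    (h14 : f1 ≠ f4) (h25 : f2 ≠ f5) (h23 : f2 ≠ f3) (h26 : f2 ≠ f6) (h36 : f3 ≠ f6)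
    (h4a : f4 ≠ D ⟨s(v5, p5), hc.mA5⟩) (h5a : f5 ≠ D ⟨s(v6, p6), hc.mA6⟩)
    (h6a : f6 ≠ D ⟨s(v7, p7), hc.mA7⟩)
    (h71 : f7 ≠ f1) (h74 : f7 ≠ f4) (h72 : f7 ≠ f2) (h75 : f7 ≠ f5) :
    EdgeColorable G 3 := by
  classical
  let F : Sym2 V → Fin 3 := fun s =>
    if s = s(v1, v2) then f1 else if s = s(v3, v4) then f2 else if s = s(v4, v1) then f3
    else if s = s(v2, v5) then f4 else if s = s(v3, v6) then f5 else if s = s(v4, v7) then f6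
    else if s = s(v2, v3) then f7
    else if h : s ∈ (G.deleteEdges {s(v2, v3)}).edgeSet then D ⟨s, h⟩ else 0
  have hF1 : F s(v1, v2) = f1 := by simp only [F]; simp
  have hF2 : F s(v3, v4) = f2 := by
    simp only [F]; rw [if_neg hc.nE1E2.symm]; simp
  have hF3 : F s(v4, v1) = f3 := by
    simp only [F]; rw [if_neg hc.nE1E3.symm, if_neg hc.nE2E3.symm]; simp
  have hF4 : F s(v2, v5) = f4 := by
    simp only [F]
    rw [if_neg hc.nE1E4.symm, if_neg hc.nE2E4.symm, if_neg hc.nE3E4.symm]; simp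
  have hF5 : F s(v3, v6) = f5 := by
    simp only [F]
    rw [if_neg hc.nE1E5.symm, if_neg hc.nE2E5.symm, if_neg hc.nE3E5.symm,
      if_neg hc.nE4E5.symm]; simp
  have hF6 : F s(v4, v7) = f6 := by
    simp only [F]
    rw [if_neg hc.nE1E6.symm, if_neg hc.nE2E6.symm, if_neg hc.nE3E6.symm,
      if_neg hc.nE4E6.symm, if_neg hc.nE5E6.symm]; simp
  have hF7 : F s(v2, v3) = f7 := by
    simp only [F]
    rw [if_neg hc.nE1E7.symm, if_neg hc.nE2E7.symm, if_neg hc.nE3E7.symm,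
      if_neg hc.nE4E7.symm, if_neg hc.nE5E7.symm, if_neg hc.nE6E7.symm]; simp
  have hFA1 : F s(v1, x) = D ⟨s(v1, x), hc.mA1⟩ := by
    simp only [F]
    rw [if_neg hc.nA1E1, if_neg hc.nA1E2, if_neg hc.nA1E3, if_neg hc.nA1E4,
      if_neg hc.nA1E5, if_neg hc.nA1E6, if_neg hc.nA1E7, dif_pos hc.mA1]
  have hFA5 : F s(v5, p5) = D ⟨s(v5, p5), hc.mA5⟩ := by
    simp only [F]
    rw [if_neg hc.nA5E1, if_neg hc.nA5E2, if_neg hc.nA5E3, if_neg hc.nA5E4,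
      if_neg hc.nA5E5, if_neg hc.nA5E6, if_neg hc.nA5E7, dif_pos hc.mA5]
  have hFA6 : F s(v6, p6) = D ⟨s(v6, p6), hc.mA6⟩ := by
    simp only [F]
    rw [if_neg hc.nA6E1, if_neg hc.nA6E2, if_neg hc.nA6E3, if_neg hc.nA6E4,
      if_neg hc.nA6E5, if_neg hc.nA6E6, if_neg hc.nA6E7, dif_pos hc.mA6]
  have hFA7 : F s(v7, p7) = D ⟨s(v7, p7), hc.mA7⟩ := by
    simp only [F]
    rw [if_neg hc.nA7E1, if_neg hc.nA7E2, if_neg hc.nA7E3, if_neg hc.nA7E4,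
      if_neg hc.nA7E5, if_neg hc.nA7E6, if_neg hc.nA7E7, dif_pos hc.mA7]
  have hFoth : ∀ (u : Sym2 V) (hu : u ∈ (G.deleteEdges {s(v2, v3)}).edgeSet),
      u ≠ s(v1, v2) → u ≠ s(v3, v4) → u ≠ s(v4, v1) → u ≠ s(v2, v5) → u ≠ s(v3, v6) →
      u ≠ s(v4, v7) → F u = D ⟨u, hu⟩ := by
    intro u hu h1 h2 h3 h4 h5 h6
    simp only [F]
    rw [if_neg h1, if_neg h2, if_neg h3, if_neg h4, if_neg h5, if_neg h6,
      if_neg (hc.sub_del hu).2, dif_pos hu]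
  -- the key asymmetric step
  have key : ∀ (a b : G.edgeSet) (t : V), t ∈ (a : Sym2 V) → t ∈ (b : Sym2 V) →
      (a : Sym2 V) ≠ (b : Sym2 V) →
      ((a : Sym2 V) = s(v1, v2) ∨ (a : Sym2 V) = s(v3, v4) ∨ (a : Sym2 V) = s(v4, v1) ∨
       (a : Sym2 V) = s(v2, v5) ∨ (a : Sym2 V) = s(v3, v6) ∨ (a : Sym2 V) = s(v4, v7) ∨
       (a : Sym2 V) = s(v2, v3)) →
      F (a : Sym2 V) ≠ F (b : Sym2 V) := by
    rintro a b t hta htb hab (ha | ha | ha | ha | ha | ha | ha) <;> rw [ha] at hta <;>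
      rw [ha]
    · rcases Sym2.mem_iff.mp hta with rfl | rfl
      · rcases hc.atG1 b.2 htb with hb | hb | hb <;> rw [hb]
        · exact absurd (ha.trans hb.symm) hab
        · rw [hF1, hF3]; exact h13
        · rw [hF1, hFA1]; exact h1a
      · rcases hc.atG2 b.2 htb with hb | hb | hb <;> rw [hb]
        · exact absurd (ha.trans hb.symm) hab
        · rw [hF1, hF7]; exact h71.symm
        · rw [hF1, hF4]; exact h14
    · rcases Sym2.mem_iff.mp hta with rfl | rfl
      · rcases hc.atG3 b.2 htb with hb | hb | hb <;> rw [hb]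
        · rw [hF2, hF7]; exact h72.symm
        · exact absurd (ha.trans hb.symm) hab
        · rw [hF2, hF5]; exact h25
      · rcases hc.atG4 b.2 htb with hb | hb | hb <;> rw [hb]
        · rw [hF2, hF3]; exact h23
        · exact absurd (ha.trans hb.symm) hab
        · rw [hF2, hF6]; exact h26
    · rcases Sym2.mem_iff.mp hta with rfl | rfl
      · rcases hc.atG4 b.2 htb with hb | hb | hb <;> rw [hb]
        · exact absurd (ha.trans hb.symm) hab
        · rw [hF3, hF2]; exact h23.symm
        · rw [hF3, hF6]; exact h36
      · rcases hc.atG1 b.2 htb with hb | hb | hb <;> rw [hb]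
        · rw [hF3, hF1]; exact h13.symm
        · exact absurd (ha.trans hb.symm) hab
        · rw [hF3, hFA1]; exact h3a
    · rcases Sym2.mem_iff.mp hta with rfl | rfl
      · rcases hc.atG2 b.2 htb with hb | hb | hb <;> rw [hb]
        · rw [hF4, hF1]; exact h14.symm
        · rw [hF4, hF7]; exact h74.symm
        · exact absurd (ha.trans hb.symm) hab
      · rcases hc.atG5 b.2 htb with hb | hb <;> rw [hb]
        · exact absurd (ha.trans hb.symm) hab
        · rw [hF4, hFA5]; exact h4a
    · rcases Sym2.mem_iff.mp hta with rfl | rfl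
      · rcases hc.atG3 b.2 htb with hb | hb | hb <;> rw [hb]
        · rw [hF5, hF7]; exact h75.symm
        · rw [hF5, hF2]; exact h25.symm
        · exact absurd (ha.trans hb.symm) hab
      · rcases hc.atG6 b.2 htb with hb | hb <;> rw [hb]
        · exact absurd (ha.trans hb.symm) hab
        · rw [hF5, hFA6]; exact h5a
    · rcases Sym2.mem_iff.mp hta with rfl | rfl
      · rcases hc.atG4 b.2 htb with hb | hb | hb <;> rw [hb]
        · rw [hF6, hF3]; exact h36.symm
        · rw [hF6, hF2]; exact h26.symm
        · exact absurd (ha.trans hb.symm) hab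
      · rcases hc.atG7 b.2 htb with hb | hb <;> rw [hb]
        · exact absurd (ha.trans hb.symm) hab
        · rw [hF6, hFA7]; exact h6a
    · rcases Sym2.mem_iff.mp hta with rfl | rfl
      · rcases hc.atG2 b.2 htb with hb | hb | hb <;> rw [hb]
        · rw [hF7, hF1]; exact h71
        · exact absurd (ha.trans hb.symm) hab
        · rw [hF7, hF4]; exact h74
      · rcases hc.atG3 b.2 htb with hb | hb | hb <;> rw [hb]
        · exact absurd (ha.trans hb.symm) hab
        · rw [hF7, hF2]; exact h72
        · rw [hF7, hF5]; exact h75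
  refine ⟨fun e => F (e : Sym2 V), ?_⟩
  intro e f hne hsh
  obtain ⟨t, hte, htf⟩ := hsh
  show F (e : Sym2 V) ≠ F (f : Sym2 V)
  have hef : (e : Sym2 V) ≠ (f : Sym2 V) := fun h => hne (Subtype.ext h)
  by_cases he : (e : Sym2 V) = s(v1, v2) ∨ (e : Sym2 V) = s(v3, v4) ∨
      (e : Sym2 V) = s(v4, v1) ∨ (e : Sym2 V) = s(v2, v5) ∨ (e : Sym2 V) = s(v3, v6) ∨
      (e : Sym2 V) = s(v4, v7) ∨ (e : Sym2 V) = s(v2, v3)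
  · exact key e f t hte htf hef he
  · by_cases hf : (f : Sym2 V) = s(v1, v2) ∨ (f : Sym2 V) = s(v3, v4) ∨
        (f : Sym2 V) = s(v4, v1) ∨ (f : Sym2 V) = s(v2, v5) ∨ (f : Sym2 V) = s(v3, v6) ∨
        (f : Sym2 V) = s(v4, v7) ∨ (f : Sym2 V) = s(v2, v3)
    · exact (key f e t htf hte hef.symm hf).symm
    · push_neg at he hf
      obtain ⟨he1, he2, he3, he4, he5, he6, he7⟩ := he
      obtain ⟨hf1, hf2, hf3, hf4, hf5, hf6, hf7⟩ := hf
      have hemem : (e : Sym2 V) ∈ (G.deleteEdges {s(v2, v3)}).edgeSet := by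
        rw [SimpleGraph.edgeSet_deleteEdges]
        exact ⟨e.2, by simpa using he7⟩
      have hfmem : (f : Sym2 V) ∈ (G.deleteEdges {s(v2, v3)}).edgeSet := by
        rw [SimpleGraph.edgeSet_deleteEdges]
        exact ⟨f.2, by simpa using hf7⟩
      rw [hFoth _ hemem he1 he2 he3 he4 he5 he6, hFoth _ hfmem hf1 hf2 hf3 hf4 hf5 hf6]
      refine hD ⟨(e : Sym2 V), hemem⟩ ⟨(f : Sym2 V), hfmem⟩ ?_ ⟨t, hte, htf⟩
      intro h
      exact hef (Subtype.mk_eq_mk.mp h)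


/-! ### profile values of a coloring of `G - v2v3` -/

def e1c (D : (G.deleteEdges {s(v2, v3)}).edgeSet → Fin 3) : Fin 3 := D ⟨s(v1, v2), hc.mE1⟩
def e2c (D : (G.deleteEdges {s(v2, v3)}).edgeSet → Fin 3) : Fin 3 := D ⟨s(v3, v4), hc.mE2⟩
def e3c (D : (G.deleteEdges {s(v2, v3)}).edgeSet → Fin 3) : Fin 3 := D ⟨s(v4, v1), hc.mE3⟩
def e4c (D : (G.deleteEdges {s(v2, v3)}).edgeSet → Fin 3) : Fin 3 := D ⟨s(v2, v5), hc.mE4⟩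
def e5c (D : (G.deleteEdges {s(v2, v3)}).edgeSet → Fin 3) : Fin 3 := D ⟨s(v3, v6), hc.mE5⟩
def e6c (D : (G.deleteEdges {s(v2, v3)}).edgeSet → Fin 3) : Fin 3 := D ⟨s(v4, v7), hc.mE6⟩
def a1c (D : (G.deleteEdges {s(v2, v3)}).edgeSet → Fin 3) : Fin 3 := D ⟨s(v1, x), hc.mA1⟩
def a5c (D : (G.deleteEdges {s(v2, v3)}).edgeSet → Fin 3) : Fin 3 := D ⟨s(v5, p5), hc.mA5⟩
def a6c (D : (G.deleteEdges {s(v2, v3)}).edgeSet → Fin 3) : Fin 3 := D ⟨s(v6, p6), hc.mA6⟩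
def a7c (D : (G.deleteEdges {s(v2, v3)}).edgeSet → Fin 3) : Fin 3 := D ⟨s(v7, p7), hc.mA7⟩

section Prof
variable {D : (G.deleteEdges {s(v2, v3)}).edgeSet → Fin 3}
  (hD : Proper3 (G.deleteEdges {s(v2, v3)}) D)
include hD

lemma pd13 : hc.e1c D ≠ hc.e3c D :=
  hD ⟨_, hc.mE1⟩ ⟨_, hc.mE3⟩ (fun h => hc.nE1E3 (Subtype.mk_eq_mk.mp h)) ⟨v1, by simp, by simp⟩
lemma pd1a1 : hc.e1c D ≠ hc.a1c D :=
  hD ⟨_, hc.mE1⟩ ⟨_, hc.mA1⟩ (fun h => hc.nA1E1 (Subtype.mk_eq_mk.mp h).symm) ⟨v1, by simp, by simp⟩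
lemma pd3a1 : hc.e3c D ≠ hc.a1c D :=
  hD ⟨_, hc.mE3⟩ ⟨_, hc.mA1⟩ (fun h => hc.nA1E3 (Subtype.mk_eq_mk.mp h).symm) ⟨v1, by simp, by simp⟩
lemma pd14 : hc.e1c D ≠ hc.e4c D :=
  hD ⟨_, hc.mE1⟩ ⟨_, hc.mE4⟩ (fun h => hc.nE1E4 (Subtype.mk_eq_mk.mp h)) ⟨v2, by simp, by simp⟩
lemma pd25 : hc.e2c D ≠ hc.e5c D :=
  hD ⟨_, hc.mE2⟩ ⟨_, hc.mE5⟩ (fun h => hc.nE2E5 (Subtype.mk_eq_mk.mp h)) ⟨v3, by simp, by simp⟩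
lemma pd23 : hc.e2c D ≠ hc.e3c D :=
  hD ⟨_, hc.mE2⟩ ⟨_, hc.mE3⟩ (fun h => hc.nE2E3 (Subtype.mk_eq_mk.mp h)) ⟨v4, by simp, by simp⟩
lemma pd26 : hc.e2c D ≠ hc.e6c D :=
  hD ⟨_, hc.mE2⟩ ⟨_, hc.mE6⟩ (fun h => hc.nE2E6 (Subtype.mk_eq_mk.mp h)) ⟨v4, by simp, by simp⟩
lemma pd36 : hc.e3c D ≠ hc.e6c D :=
  hD ⟨_, hc.mE3⟩ ⟨_, hc.mE6⟩ (fun h => hc.nE3E6 (Subtype.mk_eq_mk.mp h)) ⟨v4, by simp, by simp⟩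
lemma pd4a5 : hc.e4c D ≠ hc.a5c D :=
  hD ⟨_, hc.mE4⟩ ⟨_, hc.mA5⟩ (fun h => hc.nA5E4 (Subtype.mk_eq_mk.mp h).symm) ⟨v5, by simp, by simp⟩
lemma pd5a6 : hc.e5c D ≠ hc.a6c D :=
  hD ⟨_, hc.mE5⟩ ⟨_, hc.mA6⟩ (fun h => hc.nA6E5 (Subtype.mk_eq_mk.mp h).symm) ⟨v6, by simp, by simp⟩
lemma pd6a7 : hc.e6c D ≠ hc.a7c D :=
  hD ⟨_, hc.mE6⟩ ⟨_, hc.mA7⟩ (fun h => hc.nA7E6 (Subtype.mk_eq_mk.mp h).symm) ⟨v7, by simp, by simp⟩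

end Prof

/-- Any proper coloring of `G - v2v3` (in a graph that is not 3-edge-colorable)
is stuck in the standard bad pattern. -/
theorem pattern_of (hnot3 : ¬ EdgeColorable G 3)
    (D : (G.deleteEdges {s(v2, v3)}).edgeSet → Fin 3)
    (hD : Proper3 (G.deleteEdges {s(v2, v3)}) D) :
    hc.a5c D = hc.a1c D ∧ hc.a7c D = hc.a1c D ∧ hc.e2c D = hc.a1c D ∧
    hc.e4c D = hc.e3c D ∧ hc.e6c D = hc.e1c D ∧ hc.e1c D ≠ hc.a1c D ∧
    hc.e3c D ≠ hc.a1c D ∧ hc.e1c D ≠ hc.e3c D ∧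
    (hc.e5c D = hc.e1c D ∨ hc.e5c D = hc.e3c D) := by
  by_cases hall : hc.a1c D = hc.a5c D ∧ hc.a1c D = hc.a7c D
  · obtain ⟨ha5, ha7⟩ := hall
    rcases DEC2' (hc.e1c D) (hc.e2c D) (hc.e3c D) (hc.e4c D) (hc.e5c D) (hc.e6c D)
        (hc.a1c D) (hc.a6c D) with hnp | ⟨m, hm1, hm4, hm2, hm5⟩ | hpat
    · exact absurd ⟨hc.pd13 hD, hc.pd1a1 hD, hc.pd3a1 hD, hc.pd14 hD, hc.pd25 hD,
        hc.pd23 hD, hc.pd26 hD, hc.pd36 hD, ha5 ▸ hc.pd4a5 hD, hc.pd5a6 hD,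
        ha7 ▸ hc.pd6a7 hD⟩ hnp
    · exact absurd (hc.region D hD (hc.e1c D) (hc.e2c D) (hc.e3c D) (hc.e4c D) (hc.e5c D)
        (hc.e6c D) m (hc.pd13 hD) (hc.pd1a1 hD) (hc.pd3a1 hD) (hc.pd14 hD) (hc.pd25 hD)
        (hc.pd23 hD) (hc.pd26 hD) (hc.pd36 hD) (hc.pd4a5 hD) (hc.pd5a6 hD) (hc.pd6a7 hD)
        hm1 hm4 hm2 hm5) hnot3
    · exact ⟨ha5.symm, ha7.symm, hpat.1, hpat.2.1, hpat.2.2.1, hpat.2.2.2.1,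
        hpat.2.2.2.2.1, hpat.2.2.2.2.2.1, hpat.2.2.2.2.2.2⟩
  · rcases DEC1' (hc.a1c D) (hc.a5c D) (hc.a6c D) (hc.a7c D) with h |
      ⟨f1, f2, f3, f4, f5, f6, f7, ⟨g13, g1a, g3a, g14, g25, g23, g26, g36, g4a, g5a, g6a⟩,
        h71, h74, h72, h75⟩
    · exact absurd h hall
    · exact absurd (hc.region D hD f1 f2 f3 f4 f5 f6 f7 g13 g1a g3a g14 g25 g23 g26 g36
        g4a g5a g6a h71 h74 h72 h75) hnot3


/-- Case `e5 = y`: the Kempe chain argument at `v3v4` gives a contradiction. -/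
theorem caseSY (hnot3 : ¬ EdgeColorable G 3)
    (D : (G.deleteEdges {s(v2, v3)}).edgeSet → Fin 3)
    (hD : Proper3 (G.deleteEdges {s(v2, v3)}) D)
    (c x y : Fin 3) (hcx : c ≠ x) (hcy : c ≠ y) (hxy : x ≠ y)
    (hE1 : hc.e1c D = x) (hE2 : hc.e2c D = c) (hE3 : hc.e3c D = y)
    (hE4 : hc.e4c D = y) (hE5 : hc.e5c D = y) (hA5 : hc.a5c D = c) : False := by
  haveI : Nonempty V := ⟨v1⟩
  set e0 : (G.deleteEdges {s(v2, v3)}).edgeSet := ⟨s(v3, v4), hc.mE2⟩ with he0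
  have h0 : D e0 = c ∨ D e0 = x := Or.inl hE2
  set D' := swapC D c x e0 with hD'def
  have hD' : Proper3 (G.deleteEdges {s(v2, v3)}) D' := swap_proper D c x e0 hD h0
  obtain ⟨q5, q7, q2, q4, q6, qn1, qn3, qn13, q5or⟩ := hc.pattern_of hnot3 D' hD'
  have hrch2 : Rch D c x e0 e0 := Relation.ReflTransGen.refl
  have hv2' : hc.e2c D' = x := by
    show swapC D c x e0 e0 = x
    rw [swapC_of D c x e0 hrch2]
    have hDe : D e0 = c := hE2
    rw [hDe]; exact sw_alpha c x
  have hnotr3 : ¬ Rch D c x e0 ⟨s(v4, v1), hc.mE3⟩ := by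
    intro hr
    rcases rch_color D c x e0 h0 hr with h | h
    · exact hcy (h.symm.trans hE3)
    · exact hxy (h.symm.trans hE3)
  have hv3' : hc.e3c D' = y := by
    show swapC D c x e0 ⟨s(v4, v1), hc.mE3⟩ = y
    rw [swapC_of_not D c x e0 hnotr3]; exact hE3
  have ha1' : hc.a1c D' = x := q2.symm.trans hv2'
  have hv1' : hc.e1c D' = c := by
    have hne_x : hc.e1c D' ≠ x := fun h => qn1 (h.trans ha1'.symm)
    have hne_y : hc.e1c D' ≠ y := fun h => qn13 (h.trans hv3'.symm)
    rcases fin3_third' c x y (hc.e1c D') with h | h | h | h | h | h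
    · exact absurd h hcx
    · exact absurd h hcy
    · exact absurd h hxy
    · exact absurd h hne_x
    · exact absurd h hne_y
    · exact h
  have hrch1 : Rch D c x e0 ⟨s(v1, v2), hc.mE1⟩ := by
    apply rch_of_ne D c x e0
    show hc.e1c D' ≠ hc.e1c D
    rw [hv1', hE1]; exact hcx
  have ha5' : hc.a5c D' = x := q5.trans ha1'
  have hrchA5 : Rch D c x e0 ⟨s(v5, p5), hc.mA5⟩ := by
    apply rch_of_ne D c x e0
    show hc.a5c D' ≠ hc.a5c D
    rw [ha5', hA5]; exact hcx.symm
  refine three_leaf D c x e0 hD hcx h0 v2 v3 v5 ⟨s(v1, v2), hc.mE1⟩ e0 ⟨s(v5, p5), hc.mA5⟩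
    hc.d23 hc.d25 hc.d35 (by simp) (by simp [he0]) (by simp) hrch1 hrch2 hrchA5 ?_ ?_ ?_
  · intro f hvf hcf
    rcases hc.atd2 f.2 hvf with h | h
    · exact Subtype.ext h
    · exfalso
      have hfv : D f = y := by rw [show f = ⟨s(v2, v5), hc.mE4⟩ from Subtype.ext h]; exact hE4
      rcases hcf with h' | h'
      · exact hcy (hfv ▸ h').symm
      · exact hxy (hfv ▸ h').symm
  · intro f hvf hcf
    rcases hc.atd3 f.2 hvf with h | h
    · exact Subtype.ext h
    · exfalso
      have hfv : D f = y := by rw [show f = ⟨s(v3, v6), hc.mE5⟩ from Subtype.ext h]; exact hE5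
      rcases hcf with h' | h'
      · exact hcy (hfv ▸ h').symm
      · exact hxy (hfv ▸ h').symm
  · intro f hvf hcf
    rcases hc.atd5 f.2 hvf with h | h
    · exfalso
      have hfv : D f = y := by rw [show f = ⟨s(v2, v5), hc.mE4⟩ from Subtype.ext h]; exact hE4
      rcases hcf with h' | h'
      · exact hcy (hfv ▸ h').symm
      · exact hxy (hfv ▸ h').symm
    · exact Subtype.ext h

/-- Case `e5 = x`, `a6 = y`: Kempe chain at `v3v6`. -/
theorem caseSX (hnot3 : ¬ EdgeColorable G 3)
    (D : (G.deleteEdges {s(v2, v3)}).edgeSet → Fin 3)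
    (hD : Proper3 (G.deleteEdges {s(v2, v3)}) D)
    (c x y : Fin 3) (hcx : c ≠ x) (hcy : c ≠ y) (hxy : x ≠ y)
    (hE1 : hc.e1c D = x) (hE2 : hc.e2c D = c) (hE3 : hc.e3c D = y)
    (hE4 : hc.e4c D = y) (hE5 : hc.e5c D = x) (hA5 : hc.a5c D = c)
    (hA6 : hc.a6c D = y) : False := by
  haveI : Nonempty V := ⟨v1⟩
  set e0 : (G.deleteEdges {s(v2, v3)}).edgeSet := ⟨s(v3, v6), hc.mE5⟩ with he0
  have h0 : D e0 = c ∨ D e0 = x := Or.inr hE5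
  set D' := swapC D c x e0 with hD'def
  have hD' : Proper3 (G.deleteEdges {s(v2, v3)}) D' := swap_proper D c x e0 hD h0
  obtain ⟨q5, q7, q2, q4, q6, qn1, qn3, qn13, q5or⟩ := hc.pattern_of hnot3 D' hD'
  have hrch2 : Rch D c x e0 ⟨s(v3, v4), hc.mE2⟩ :=
    Relation.ReflTransGen.single
      ⟨fun h => hc.nE2E5 (Subtype.mk_eq_mk.mp h).symm, Or.inl hE2, ⟨v3, by simp [he0], by simp [he0]⟩⟩
  have hv2' : hc.e2c D' = x := by
    show swapC D c x e0 ⟨s(v3, v4), hc.mE2⟩ = x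
    rw [swapC_of D c x e0 hrch2]
    have hDe : D ⟨s(v3, v4), hc.mE2⟩ = c := hE2
    rw [hDe]; exact sw_alpha c x
  have hnotr3 : ¬ Rch D c x e0 ⟨s(v4, v1), hc.mE3⟩ := by
    intro hr
    rcases rch_color D c x e0 h0 hr with h | h
    · exact hcy (h.symm.trans hE3)
    · exact hxy (h.symm.trans hE3)
  have hv3' : hc.e3c D' = y := by
    show swapC D c x e0 ⟨s(v4, v1), hc.mE3⟩ = y
    rw [swapC_of_not D c x e0 hnotr3]; exact hE3
  have ha1' : hc.a1c D' = x := q2.symm.trans hv2'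
  have hv1' : hc.e1c D' = c := by
    have hne_x : hc.e1c D' ≠ x := fun h => qn1 (h.trans ha1'.symm)
    have hne_y : hc.e1c D' ≠ y := fun h => qn13 (h.trans hv3'.symm)
    rcases fin3_third' c x y (hc.e1c D') with h | h | h | h | h | h
    · exact absurd h hcx
    · exact absurd h hcy
    · exact absurd h hxy
    · exact absurd h hne_x
    · exact absurd h hne_y
    · exact h
  have hrch1 : Rch D c x e0 ⟨s(v1, v2), hc.mE1⟩ := by
    apply rch_of_ne D c x e0
    show hc.e1c D' ≠ hc.e1c D
    rw [hv1', hE1]; exact hcx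
  have ha5' : hc.a5c D' = x := q5.trans ha1'
  have hrchA5 : Rch D c x e0 ⟨s(v5, p5), hc.mA5⟩ := by
    apply rch_of_ne D c x e0
    show hc.a5c D' ≠ hc.a5c D
    rw [ha5', hA5]; exact hcx.symm
  refine three_leaf D c x e0 hD hcx h0 v2 v5 v6 ⟨s(v1, v2), hc.mE1⟩ ⟨s(v5, p5), hc.mA5⟩ e0
    hc.d25 hc.d26 hc.d56 (by simp) (by simp) (by simp [he0]) hrch1 hrchA5
    Relation.ReflTransGen.refl ?_ ?_ ?_
  · intro f hvf hcf
    rcases hc.atd2 f.2 hvf with h | h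
    · exact Subtype.ext h
    · exfalso
      have hfv : D f = y := by rw [show f = ⟨s(v2, v5), hc.mE4⟩ from Subtype.ext h]; exact hE4
      rcases hcf with h' | h'
      · exact hcy (hfv ▸ h').symm
      · exact hxy (hfv ▸ h').symm
  · intro f hvf hcf
    rcases hc.atd5 f.2 hvf with h | h
    · exfalso
      have hfv : D f = y := by rw [show f = ⟨s(v2, v5), hc.mE4⟩ from Subtype.ext h]; exact hE4
      rcases hcf with h' | h'
      · exact hcy (hfv ▸ h').symm
      · exact hxy (hfv ▸ h').symm
    · exact Subtype.ext h
  · intro f hvf hcf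
    rcases hc.atd6 f.2 hvf with h | h
    · exact Subtype.ext h
    · exfalso
      have hfv : D f = y := by rw [show f = ⟨s(v6, p6), hc.mA6⟩ from Subtype.ext h]; exact hA6
      rcases hcf with h' | h'
      · exact hcy (hfv ▸ h').symm
      · exact hxy (hfv ▸ h').symm


/-- Case `e5 = x`, `a6 = c`: recolor `v3v6` to `y` and reduce to `caseSY`. -/
theorem caseSXc (hnot3 : ¬ EdgeColorable G 3)
    (D : (G.deleteEdges {s(v2, v3)}).edgeSet → Fin 3)
    (hD : Proper3 (G.deleteEdges {s(v2, v3)}) D)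
    (c x y : Fin 3) (hcx : c ≠ x) (hcy : c ≠ y) (hxy : x ≠ y)
    (hE1 : hc.e1c D = x) (hE2 : hc.e2c D = c) (hE3 : hc.e3c D = y)
    (hE4 : hc.e4c D = y) (hE5 : hc.e5c D = x) (hA5 : hc.a5c D = c)
    (hA6 : hc.a6c D = c) : False := by
  classical
  set E5s : (G.deleteEdges {s(v2, v3)}).edgeSet := ⟨s(v3, v6), hc.mE5⟩ with hE5s
  set D2 : (G.deleteEdges {s(v2, v3)}).edgeSet → Fin 3 :=
    fun e => if e = E5s then y else D e with hD2def
  have hval : ∀ (e : (G.deleteEdges {s(v2, v3)}).edgeSet), e ≠ E5s → D2 e = D e := by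
    intro e he; simp only [D2]; rw [if_neg he]
  have hvalE5 : D2 E5s = y := by simp only [D2]; simp
  have hkey : ∀ f : (G.deleteEdges {s(v2, v3)}).edgeSet, f ≠ E5s →
      (∃ t, t ∈ (E5s : Sym2 V) ∧ t ∈ (f : Sym2 V)) → y ≠ D f := by
    intro f hne ⟨t, htE, htf⟩
    have ht : t = v3 ∨ t = v6 := Sym2.mem_iff.mp htE
    rcases ht with h | h
    · rw [h] at htf
      rcases hc.atd3 f.2 htf with h' | h'
      · have : D f = c := by rw [show f = ⟨s(v3, v4), hc.mE2⟩ from Subtype.ext h']; exact hE2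
        rw [this]; exact hcy.symm
      · exact absurd (Subtype.ext h') hne
    · rw [h] at htf
      rcases hc.atd6 f.2 htf with h' | h'
      · exact absurd (Subtype.ext h') hne
      · have : D f = c := by rw [show f = ⟨s(v6, p6), hc.mA6⟩ from Subtype.ext h']; exact hA6
        rw [this]; exact hcy.symm
  have hD2 : Proper3 (G.deleteEdges {s(v2, v3)}) D2 := by
    intro e f hne hsh
    by_cases he : e = E5s <;> by_cases hf : f = E5s
    · exact absurd (he.trans hf.symm) hne
    · subst he
      rw [hvalE5, hval f hf]
      exact hkey f hf hsh
    · subst hf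
      rw [hvalE5, hval e he]
      obtain ⟨t, ht1, ht2⟩ := hsh
      exact (hkey e he ⟨t, ht2, ht1⟩).symm
    · rw [hval e he, hval f hf]
      exact hD e f hne hsh
  have hne1 : (⟨s(v1, v2), hc.mE1⟩ : (G.deleteEdges {s(v2, v3)}).edgeSet) ≠ E5s :=
    fun h => hc.nE1E5 (Subtype.mk_eq_mk.mp h)
  have hne2 : (⟨s(v3, v4), hc.mE2⟩ : (G.deleteEdges {s(v2, v3)}).edgeSet) ≠ E5s :=
    fun h => hc.nE2E5 (Subtype.mk_eq_mk.mp h)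
  have hne3 : (⟨s(v4, v1), hc.mE3⟩ : (G.deleteEdges {s(v2, v3)}).edgeSet) ≠ E5s :=
    fun h => hc.nE3E5 (Subtype.mk_eq_mk.mp h)
  have hne4 : (⟨s(v2, v5), hc.mE4⟩ : (G.deleteEdges {s(v2, v3)}).edgeSet) ≠ E5s :=
    fun h => hc.nE4E5 (Subtype.mk_eq_mk.mp h)
  have hneA5 : (⟨s(v5, p5), hc.mA5⟩ : (G.deleteEdges {s(v2, v3)}).edgeSet) ≠ E5s :=
    fun h => hc.nA5E5 (Subtype.mk_eq_mk.mp h)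
  exact hc.caseSY hnot3 D2 hD2 c x y hcx hcy hxy
    ((hval _ hne1).trans hE1) ((hval _ hne2).trans hE2) ((hval _ hne3).trans hE3)
    ((hval _ hne4).trans hE4) hvalE5 ((hval _ hneA5).trans hA5)

/-- Master lemma: no proper 3-edge-coloring of `G - v2v3` can exist when `G`
itself is not 3-edge-colorable and contains the configuration. -/
theorem noProper (hnot3 : ¬ EdgeColorable G 3)
    (D : (G.deleteEdges {s(v2, v3)}).edgeSet → Fin 3)
    (hD : Proper3 (G.deleteEdges {s(v2, v3)}) D) : False := by
  obtain ⟨ha5, ha7, he2, he4, he6, hn1, hn3, hn13, he5or⟩ := hc.pattern_of hnot3 D hD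
  set c := hc.a1c D with hc_def
  set xx := hc.e1c D with hx_def
  set yy := hc.e3c D with hy_def
  have hcx : c ≠ xx := fun h => hn1 h.symm
  have hcy : c ≠ yy := fun h => hn3 h.symm
  have hxy : xx ≠ yy := hn13
  rcases he5or with h5 | h5
  · -- e5 = x; look at a6
    have ha6x : hc.a6c D ≠ xx := fun h => (hc.pd5a6 hD) (h5.trans h.symm)
    have ha6cy : hc.a6c D = yy ∨ hc.a6c D = c := by
      rcases fin3_third' c xx yy (hc.a6c D) with h | h | h | h | h | h
      · exact absurd h hcx
      · exact absurd h hcy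
      · exact absurd h hxy
      · exact absurd h ha6x
      · exact Or.inl h
      · exact Or.inr h
    rcases ha6cy with h6 | h6
    · exact hc.caseSX hnot3 D hD c xx yy hcx hcy hxy rfl he2 rfl he4 h5 ha5 h6
    · exact hc.caseSXc hnot3 D hD c xx yy hcx hcy hxy rfl he2 rfl he4 h5 ha5 h6
  · exact hc.caseSY hnot3 D hD c xx yy hcx hcy hxy rfl he2 rfl he4 h5 ha5

end Cfg
end Main

/-- No 3-critical graph contains a 4-cycle `v1 v2 v3 v4` of
3-vertices, three of which (`v2`, `v3`, `v4`) have pairwise distinct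
2-neighbors `v5`, `v6`, `v7` off the cycle. -/
theorem stmt_10 {V : Type} [Fintype V] (G : SimpleGraph V) (hG : IsCritical 3 G) :
    ¬ ∃ v1 v2 v3 v4 v5 v6 v7 : V,
      [v1, v2, v3, v4, v5, v6, v7].Pairwise (· ≠ ·) ∧
      deg G v1 = 3 ∧ deg G v2 = 3 ∧ deg G v3 = 3 ∧ deg G v4 = 3 ∧
      deg G v5 = 2 ∧ deg G v6 = 2 ∧ deg G v7 = 2 ∧
      G.Adj v1 v2 ∧ G.Adj v2 v3 ∧ G.Adj v3 v4 ∧ G.Adj v4 v1 ∧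
      G.Adj v2 v5 ∧ G.Adj v3 v6 ∧ G.Adj v4 v7 := by
  rintro ⟨v1, v2, v3, v4, v5, v6, v7, hpair,
    hd1, hd2, hd3, hd4, hd5, hd6, hd7, h12, h23, h34, h41, h25, h36, h47⟩
  obtain ⟨hmax, hex, hchi, hdel⟩ := hG
  -- distinctness facts
  obtain ⟨q1, hpair⟩ := List.pairwise_cons.mp hpair
  obtain ⟨q2, hpair⟩ := List.pairwise_cons.mp hpair
  obtain ⟨q3, hpair⟩ := List.pairwise_cons.mp hpair
  obtain ⟨q4, hpair⟩ := List.pairwise_cons.mp hpair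
  obtain ⟨q5, hpair⟩ := List.pairwise_cons.mp hpair
  obtain ⟨q6, hpair⟩ := List.pairwise_cons.mp hpair
  have d12 : v1 ≠ v2 := q1 v2 (by simp)
  have d13 : v1 ≠ v3 := q1 v3 (by simp)
  have d14 : v1 ≠ v4 := q1 v4 (by simp)
  have d15 : v1 ≠ v5 := q1 v5 (by simp)
  have d16 : v1 ≠ v6 := q1 v6 (by simp)
  have d17 : v1 ≠ v7 := q1 v7 (by simp)
  have d23 : v2 ≠ v3 := q2 v3 (by simp)
  have d24 : v2 ≠ v4 := q2 v4 (by simp)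
  have d25 : v2 ≠ v5 := q2 v5 (by simp)
  have d26 : v2 ≠ v6 := q2 v6 (by simp)
  have d27 : v2 ≠ v7 := q2 v7 (by simp)
  have d34 : v3 ≠ v4 := q3 v4 (by simp)
  have d35 : v3 ≠ v5 := q3 v5 (by simp)
  have d36 : v3 ≠ v6 := q3 v6 (by simp)
  have d37 : v3 ≠ v7 := q3 v7 (by simp)
  have d45 : v4 ≠ v5 := q4 v5 (by simp)
  have d46 : v4 ≠ v6 := q4 v6 (by simp)
  have d47 : v4 ≠ v7 := q4 v7 (by simp)
  have d56 : v5 ≠ v6 := q5 v6 (by simp)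
  have d57 : v5 ≠ v7 := q5 v7 (by simp)
  have d67 : v6 ≠ v7 := q6 v7 (by simp)
  -- neighbor sets of v2, v3, v4
  have hN2 : G.neighborSet v2 = {v1, v3, v5} := by
    refine (Set.eq_of_subset_of_ncard_le ?_ ?_ (Set.toFinite _)).symm
    · intro u hu
      rcases hu with rfl | rfl | rfl
      · exact h12.symm
      · exact h23
      · exact h25
    · have h3 : ({v1, v3, v5} : Set V).ncard = 3 :=
        Set.ncard_eq_three.mpr ⟨v1, v3, v5, d13, d15, d35, rfl⟩
      rw [h3]
      exact le_of_eq hd2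
  have hN3 : G.neighborSet v3 = {v2, v4, v6} := by
    refine (Set.eq_of_subset_of_ncard_le ?_ ?_ (Set.toFinite _)).symm
    · intro u hu
      rcases hu with rfl | rfl | rfl
      · exact h23.symm
      · exact h34
      · exact h36
    · have h3 : ({v2, v4, v6} : Set V).ncard = 3 :=
        Set.ncard_eq_three.mpr ⟨v2, v4, v6, d24, d26, d46, rfl⟩
      rw [h3]
      exact le_of_eq hd3
  have hN4 : G.neighborSet v4 = {v1, v3, v7} := by
    refine (Set.eq_of_subset_of_ncard_le ?_ ?_ (Set.toFinite _)).symm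
    · intro u hu
      rcases hu with rfl | rfl | rfl
      · exact h41
      · exact h34.symm
      · exact h47
    · have h3 : ({v1, v3, v7} : Set V).ncard = 3 :=
        Set.ncard_eq_three.mpr ⟨v1, v3, v7, d13, d17, d37, rfl⟩
      rw [h3]
      exact le_of_eq hd4
  -- third neighbor of v1
  have hex1 : ∃ xx, xx ∈ G.neighborSet v1 ∧ xx ≠ v2 ∧ xx ≠ v4 := by
    by_contra hcon
    push_neg at hcon
    have hsub : G.neighborSet v1 ⊆ {v2, v4} := by
      intro u hu
      by_cases hu2 : u = v2
      · exact Or.inl hu2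
      · exact Or.inr (hcon u hu hu2)
    have := Set.ncard_le_ncard hsub (Set.toFinite _)
    rw [Set.ncard_pair d24] at this
    have hd1' : (G.neighborSet v1).ncard = 3 := hd1
    omega
  obtain ⟨x, hxN, hxv2, hxv4⟩ := hex1
  have hadj1x : G.Adj v1 x := hxN
  have hN1 : G.neighborSet v1 = {v2, v4, x} := by
    refine (Set.eq_of_subset_of_ncard_le ?_ ?_ (Set.toFinite _)).symm
    · intro u hu
      rcases hu with rfl | rfl | rfl
      · exact h12
      · exact h41.symm
      · exact hxN
    · have h3 : ({v2, v4, x} : Set V).ncard = 3 :=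
        Set.ncard_eq_three.mpr ⟨v2, v4, x, d24, Ne.symm hxv2, Ne.symm hxv4, rfl⟩
      rw [h3]
      exact le_of_eq hd1
  -- second neighbors of v5, v6, v7
  have hex5 : ∃ u, u ∈ G.neighborSet v5 ∧ u ≠ v2 := by
    by_contra hcon
    push_neg at hcon
    have hsub : G.neighborSet v5 ⊆ {v2} := fun u hu => hcon u hu
    have := Set.ncard_le_ncard hsub (Set.toFinite _)
    rw [Set.ncard_singleton] at this
    have hd5' : (G.neighborSet v5).ncard = 2 := hd5
    omega
  obtain ⟨p5, hp5N, hp5v2⟩ := hex5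
  have hN5 : G.neighborSet v5 = {v2, p5} := by
    refine (Set.eq_of_subset_of_ncard_le ?_ ?_ (Set.toFinite _)).symm
    · intro u hu
      rcases hu with rfl | rfl
      · exact h25.symm
      · exact hp5N
    · rw [Set.ncard_pair (Ne.symm hp5v2)]
      exact le_of_eq hd5
  have hex6 : ∃ u, u ∈ G.neighborSet v6 ∧ u ≠ v3 := by
    by_contra hcon
    push_neg at hcon
    have hsub : G.neighborSet v6 ⊆ {v3} := fun u hu => hcon u hu
    have := Set.ncard_le_ncard hsub (Set.toFinite _)
    rw [Set.ncard_singleton] at this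
    have hd6' : (G.neighborSet v6).ncard = 2 := hd6
    omega
  obtain ⟨p6, hp6N, hp6v3⟩ := hex6
  have hN6 : G.neighborSet v6 = {v3, p6} := by
    refine (Set.eq_of_subset_of_ncard_le ?_ ?_ (Set.toFinite _)).symm
    · intro u hu
      rcases hu with rfl | rfl
      · exact h36.symm
      · exact hp6N
    · rw [Set.ncard_pair (Ne.symm hp6v3)]
      exact le_of_eq hd6
  have hex7 : ∃ u, u ∈ G.neighborSet v7 ∧ u ≠ v4 := by
    by_contra hcon
    push_neg at hcon
    have hsub : G.neighborSet v7 ⊆ {v4} := fun u hu => hcon u hu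
    have := Set.ncard_le_ncard hsub (Set.toFinite _)
    rw [Set.ncard_singleton] at this
    have hd7' : (G.neighborSet v7).ncard = 2 := hd7
    omega
  obtain ⟨p7, hp7N, hp7v4⟩ := hex7
  have hN7 : G.neighborSet v7 = {v4, p7} := by
    refine (Set.eq_of_subset_of_ncard_le ?_ ?_ (Set.toFinite _)).symm
    · intro u hu
      rcases hu with rfl | rfl
      · exact h47.symm
      · exact hp7N
    · rw [Set.ncard_pair (Ne.symm hp7v4)]
      exact le_of_eq hd7
  -- extra distinctness
  have xv1 : x ≠ v1 := hadj1x.ne'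
  have xv3 : x ≠ v3 := by
    intro h
    have : v1 ∈ G.neighborSet v3 := by rw [← h]; exact hadj1x.symm
    rw [hN3] at this
    rcases this with h' | h' | h'
    · exact d12 h'
    · exact d14 h'
    · exact d16 h'
  have p5v3 : p5 ≠ v3 := by
    intro h
    have : v5 ∈ G.neighborSet v3 := by
      rw [← h]; exact (SimpleGraph.mem_neighborSet _ _ _).mpr
        ((SimpleGraph.mem_neighborSet _ _ _).mp hp5N).symm
    rw [hN3] at this
    rcases this with h' | h' | h'
    · exact d25 h'.symm
    · exact d45 h'.symm
    · exact d56 h'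
  have p5v4 : p5 ≠ v4 := by
    intro h
    have : v5 ∈ G.neighborSet v4 := by
      rw [← h]; exact (SimpleGraph.mem_neighborSet _ _ _).mpr
        ((SimpleGraph.mem_neighborSet _ _ _).mp hp5N).symm
    rw [hN4] at this
    rcases this with h' | h' | h'
    · exact d15 h'.symm
    · exact d35 h'.symm
    · exact d57 h'
  have p5v5 : p5 ≠ v5 := ((SimpleGraph.mem_neighborSet _ _ _).mp hp5N).ne'
  have p6v2 : p6 ≠ v2 := by
    intro h
    have : v6 ∈ G.neighborSet v2 := by
      rw [← h]; exact (SimpleGraph.mem_neighborSet _ _ _).mpr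
        ((SimpleGraph.mem_neighborSet _ _ _).mp hp6N).symm
    rw [hN2] at this
    rcases this with h' | h' | h'
    · exact d16 h'.symm
    · exact d36 h'.symm
    · exact d56 h'.symm
  have p6v4 : p6 ≠ v4 := by
    intro h
    have : v6 ∈ G.neighborSet v4 := by
      rw [← h]; exact (SimpleGraph.mem_neighborSet _ _ _).mpr
        ((SimpleGraph.mem_neighborSet _ _ _).mp hp6N).symm
    rw [hN4] at this
    rcases this with h' | h' | h'
    · exact d16 h'.symm
    · exact d36 h'.symm
    · exact d67 h'
  have p6v6 : p6 ≠ v6 := ((SimpleGraph.mem_neighborSet _ _ _).mp hp6N).ne'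
  have p7v2 : p7 ≠ v2 := by
    intro h
    have : v7 ∈ G.neighborSet v2 := by
      rw [← h]; exact (SimpleGraph.mem_neighborSet _ _ _).mpr
        ((SimpleGraph.mem_neighborSet _ _ _).mp hp7N).symm
    rw [hN2] at this
    rcases this with h' | h' | h'
    · exact d17 h'.symm
    · exact d37 h'.symm
    · exact d57 h'.symm
  have p7v3 : p7 ≠ v3 := by
    intro h
    have : v7 ∈ G.neighborSet v3 := by
      rw [← h]; exact (SimpleGraph.mem_neighborSet _ _ _).mpr
        ((SimpleGraph.mem_neighborSet _ _ _).mp hp7N).symm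
    rw [hN3] at this
    rcases this with h' | h' | h'
    · exact d27 h'.symm
    · exact d47 h'.symm
    · exact d67 h'.symm
  have p7v7 : p7 ≠ v7 := ((SimpleGraph.mem_neighborSet _ _ _).mp hp7N).ne'
  -- assemble the configuration
  have hcfg : Cfg G v1 v2 v3 v4 v5 v6 v7 x p5 p6 p7 :=
    ⟨d12, d13, d14, d15, d16, d17, d23, d24, d25, d26, d27, d34, d35, d36, d37,
     d45, d46, d47, d56, d57, d67, xv1, hxv2, xv3, hxv4,
     hp5v2, p5v3, p5v4, p5v5, p6v2, hp6v3, p6v4, p6v6, p7v2, p7v3, hp7v4, p7v7,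
     hN1, hN2, hN3, hN4, hN5, hN6, hN7⟩
  -- contradiction
  have hnot3 : ¬ EdgeColorable G 3 := by
    intro h
    have := chromIndex_le h
    rw [hchi] at this
    omega
  have hmemE7 : s(v2, v3) ∈ G.edgeSet := h23
  have hchi' := hdel _ hmemE7
  have hcol := chromIndex_colorable (G.deleteEdges {s(v2, v3)})
  rw [hchi'] at hcol
  obtain ⟨D, hD⟩ := hcol
  exact hcfg.noProper hnot3 D hD
end

section
/- The graph P* obtained from the Petersen graph by deleting one vertex has 9 vertices, 12 edges, maximum degree 3, and is 3-critical: its chromatic index is 4, and deleting any single edge yields a graph with chromatic index 3. In particular, P* has average degree exactly 2 + 2/3. -/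
-- ## Auxiliary instances

instance PStar.adjDecidable : DecidableRel PStar.Adj :=
  fun a b => inferInstanceAs (Decidable (Disjoint a.1.1 b.1.1))

/-- Graph obtained by deleting a single edge. -/
def Gdel (e : Sym2 PV) : SimpleGraph PV := PStar.deleteEdges {e}

instance Gdel.adjDecidable (e : Sym2 PV) : DecidableRel (Gdel e).Adj :=
  fun a b => decidable_of_iff (PStar.Adj a b ∧ ¬ s(a, b) = e)
    (by rw [Gdel, SimpleGraph.deleteEdges_adj]; simp)

-- ## General lemmas

lemma edgeColorable_mono {V : Type*} {G : SimpleGraph V} {m n : ℕ}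
    (h : EdgeColorable G m) (hmn : m ≤ n) : EdgeColorable G n := by
  obtain ⟨C, hC⟩ := h
  exact ⟨fun e => Fin.castLE hmn (C e), fun e₁ e₂ hne hsh hEq =>
    hC e₁ e₂ hne hsh (Fin.castLE_injective hmn hEq)⟩

lemma chromIndex_eq_succ {V : Type*} {G : SimpleGraph V} {k : ℕ}
    (h1 : EdgeColorable G (k + 1)) (h2 : ¬ EdgeColorable G k) :
    chromIndex G = k + 1 := by
  refine le_antisymm (Nat.sInf_le h1) (le_csInf ⟨_, h1⟩ fun m hm => ?_)
  by_contra hlt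
  push_neg at hlt
  exact h2 (edgeColorable_mono hm (by omega))

lemma not_two {V : Type*} {G : SimpleGraph V} (v : V) (e1 e2 e3 : G.edgeSet)
    (h12 : e1 ≠ e2) (h13 : e1 ≠ e3) (h23 : e2 ≠ e3)
    (hv1 : v ∈ (e1 : Sym2 V)) (hv2 : v ∈ (e2 : Sym2 V)) (hv3 : v ∈ (e3 : Sym2 V)) :
    ¬ EdgeColorable G 2 := by
  rintro ⟨C, hC⟩
  have a := hC e1 e2 h12 ⟨v, hv1, hv2⟩
  have b := hC e1 e3 h13 ⟨v, hv1, hv3⟩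
  have c := hC e2 e3 h23 ⟨v, hv2, hv3⟩
  have ha : (C e1).val ≠ (C e2).val := fun h => a (Fin.val_injective h)
  have hb : (C e1).val ≠ (C e3).val := fun h => b (Fin.val_injective h)
  have hc : (C e2).val ≠ (C e3).val := fun h => c (Fin.val_injective h)
  have := (C e1).isLt; have := (C e2).isLt; have := (C e3).isLt
  omega

-- ## Concrete data

def w02 : PV := ⟨⟨{0, 2}, by decide⟩, by decide⟩

def w03 : PV := ⟨⟨{0, 3}, by decide⟩, by decide⟩

def w04 : PV := ⟨⟨{0, 4}, by decide⟩, by decide⟩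

def w12 : PV := ⟨⟨{1, 2}, by decide⟩, by decide⟩

def w13 : PV := ⟨⟨{1, 3}, by decide⟩, by decide⟩

def w14 : PV := ⟨⟨{1, 4}, by decide⟩, by decide⟩

def w23 : PV := ⟨⟨{2, 3}, by decide⟩, by decide⟩

def w24 : PV := ⟨⟨{2, 4}, by decide⟩, by decide⟩

def w34 : PV := ⟨⟨{3, 4}, by decide⟩, by decide⟩

def E0 : Sym2 PV := s(w02, w13)

def E1 : Sym2 PV := s(w02, w14)

def E2 : Sym2 PV := s(w02, w34)

def E3 : Sym2 PV := s(w03, w14)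

def E4 : Sym2 PV := s(w14, w23)

def E5 : Sym2 PV := s(w03, w12)

def E6 : Sym2 PV := s(w03, w24)

def E7 : Sym2 PV := s(w12, w34)

def E8 : Sym2 PV := s(w04, w12)

def E9 : Sym2 PV := s(w04, w13)

def E10 : Sym2 PV := s(w04, w23)

def E11 : Sym2 PV := s(w13, w24)

theorem no3core : ∀ c0 : Fin 3,
    ∀ c1 : Fin 3, c0 ≠ c1 →
    ∀ c2 : Fin 3, c0 ≠ c2 → c1 ≠ c2 →
    ∀ c3 : Fin 3, c1 ≠ c3 →
    ∀ c4 : Fin 3, c1 ≠ c4 → c3 ≠ c4 →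
    ∀ c5 : Fin 3, c3 ≠ c5 →
    ∀ c6 : Fin 3, c3 ≠ c6 → c5 ≠ c6 →
    ∀ c7 : Fin 3, c2 ≠ c7 → c5 ≠ c7 →
    ∀ c8 : Fin 3, c5 ≠ c8 → c7 ≠ c8 →
    ∀ c9 : Fin 3, c0 ≠ c9 → c8 ≠ c9 →
    ∀ c10 : Fin 3, c4 ≠ c10 → c8 ≠ c10 → c9 ≠ c10 →
    ∀ c11 : Fin 3, c0 ≠ c11 → c6 ≠ c11 → c9 ≠ c11 →
    False := by decide

def c4f : Sym2 PV → Fin 4 := fun e => if e = E0 then 0 else if e = E1 then 1 else if e = E2 then 2 else if e = E3 then 0 else if e = E4 then 2 else if e = E5 then 1 else if e = E6 then 2 else if e = E7 then 0 else if e = E8 then 2 else if e = E9 then 1 else if e = E10 then 0 else 3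

def c3f0 : Sym2 PV → Fin 3 := fun e => if e = E0 then 0 else if e = E1 then 0 else if e = E2 then 1 else if e = E3 then 1 else if e = E4 then 2 else if e = E5 then 0 else if e = E6 then 2 else if e = E7 then 2 else if e = E8 then 1 else if e = E9 then 2 else if e = E10 then 0 else 0

def c3f1 : Sym2 PV → Fin 3 := fun e => if e = E0 then 0 else if e = E1 then 0 else if e = E2 then 1 else if e = E3 then 0 else if e = E4 then 2 else if e = E5 then 1 else if e = E6 then 2 else if e = E7 then 2 else if e = E8 then 0 else if e = E9 then 2 else if e = E10 then 1 else 1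

def c3f2 : Sym2 PV → Fin 3 := fun e => if e = E0 then 0 else if e = E1 then 1 else if e = E2 then 0 else if e = E3 then 0 else if e = E4 then 2 else if e = E5 then 1 else if e = E6 then 2 else if e = E7 then 2 else if e = E8 then 0 else if e = E9 then 2 else if e = E10 then 1 else 1

def c3f3 : Sym2 PV → Fin 3 := fun e => if e = E0 then 0 else if e = E1 then 1 else if e = E2 then 2 else if e = E3 then 0 else if e = E4 then 0 else if e = E5 then 2 else if e = E6 then 0 else if e = E7 then 1 else if e = E8 then 0 else if e = E9 then 1 else if e = E10 then 2 else 2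

def c3f4 : Sym2 PV → Fin 3 := fun e => if e = E0 then 0 else if e = E1 then 1 else if e = E2 then 2 else if e = E3 then 0 else if e = E4 then 0 else if e = E5 then 2 else if e = E6 then 1 else if e = E7 then 1 else if e = E8 then 0 else if e = E9 then 1 else if e = E10 then 2 else 2

def c3f5 : Sym2 PV → Fin 3 := fun e => if e = E0 then 0 else if e = E1 then 1 else if e = E2 then 2 else if e = E3 then 0 else if e = E4 then 2 else if e = E5 then 0 else if e = E6 then 1 else if e = E7 then 0 else if e = E8 then 2 else if e = E9 then 1 else if e = E10 then 0 else 2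

def c3f6 : Sym2 PV → Fin 3 := fun e => if e = E0 then 0 else if e = E1 then 1 else if e = E2 then 2 else if e = E3 then 0 else if e = E4 then 2 else if e = E5 then 1 else if e = E6 then 0 else if e = E7 then 0 else if e = E8 then 2 else if e = E9 then 1 else if e = E10 then 0 else 2

def c3f7 : Sym2 PV → Fin 3 := fun e => if e = E0 then 0 else if e = E1 then 1 else if e = E2 then 2 else if e = E3 then 0 else if e = E4 then 2 else if e = E5 then 1 else if e = E6 then 2 else if e = E7 then 0 else if e = E8 then 0 else if e = E9 then 2 else if e = E10 then 1 else 1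

def c3f8 : Sym2 PV → Fin 3 := fun e => if e = E0 then 0 else if e = E1 then 1 else if e = E2 then 2 else if e = E3 then 0 else if e = E4 then 2 else if e = E5 then 1 else if e = E6 then 2 else if e = E7 then 0 else if e = E8 then 0 else if e = E9 then 2 else if e = E10 then 0 else 1

def c3f9 : Sym2 PV → Fin 3 := fun e => if e = E0 then 0 else if e = E1 then 1 else if e = E2 then 2 else if e = E3 then 0 else if e = E4 then 2 else if e = E5 then 1 else if e = E6 then 2 else if e = E7 then 0 else if e = E8 then 2 else if e = E9 then 0 else if e = E10 then 0 else 1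

def c3f10 : Sym2 PV → Fin 3 := fun e => if e = E0 then 0 else if e = E1 then 1 else if e = E2 then 2 else if e = E3 then 0 else if e = E4 then 2 else if e = E5 then 2 else if e = E6 then 1 else if e = E7 then 1 else if e = E8 then 0 else if e = E9 then 1 else if e = E10 then 0 else 2

def c3f11 : Sym2 PV → Fin 3 := fun e => if e = E0 then 0 else if e = E1 then 1 else if e = E2 then 2 else if e = E3 then 0 else if e = E4 then 2 else if e = E5 then 1 else if e = E6 then 2 else if e = E7 then 0 else if e = E8 then 2 else if e = E9 then 1 else if e = E10 then 0 else 0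

-- ## Key coloring facts

def ee0 : PStar.edgeSet := ⟨E0, by decide⟩
def ee1 : PStar.edgeSet := ⟨E1, by decide⟩
def ee2 : PStar.edgeSet := ⟨E2, by decide⟩
def ee3 : PStar.edgeSet := ⟨E3, by decide⟩
def ee4 : PStar.edgeSet := ⟨E4, by decide⟩
def ee5 : PStar.edgeSet := ⟨E5, by decide⟩
def ee6 : PStar.edgeSet := ⟨E6, by decide⟩
def ee7 : PStar.edgeSet := ⟨E7, by decide⟩
def ee8 : PStar.edgeSet := ⟨E8, by decide⟩
def ee9 : PStar.edgeSet := ⟨E9, by decide⟩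
def ee10 : PStar.edgeSet := ⟨E10, by decide⟩
def ee11 : PStar.edgeSet := ⟨E11, by decide⟩

lemma not_three : ¬ EdgeColorable PStar 3 := by
  rintro ⟨C, hC⟩
  exact no3core
    (C ee0)
    (C ee1)
    (hC ee0 ee1 (by decide) (by decide))
    (C ee2)
    (hC ee0 ee2 (by decide) (by decide))
    (hC ee1 ee2 (by decide) (by decide))
    (C ee3)
    (hC ee1 ee3 (by decide) (by decide))
    (C ee4)
    (hC ee1 ee4 (by decide) (by decide))
    (hC ee3 ee4 (by decide) (by decide))
    (C ee5)
    (hC ee3 ee5 (by decide) (by decide))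
    (C ee6)
    (hC ee3 ee6 (by decide) (by decide))
    (hC ee5 ee6 (by decide) (by decide))
    (C ee7)
    (hC ee2 ee7 (by decide) (by decide))
    (hC ee5 ee7 (by decide) (by decide))
    (C ee8)
    (hC ee5 ee8 (by decide) (by decide))
    (hC ee7 ee8 (by decide) (by decide))
    (C ee9)
    (hC ee0 ee9 (by decide) (by decide))
    (hC ee8 ee9 (by decide) (by decide))
    (C ee10)
    (hC ee4 ee10 (by decide) (by decide))
    (hC ee8 ee10 (by decide) (by decide))
    (hC ee9 ee10 (by decide) (by decide))
    (C ee11)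
    (hC ee0 ee11 (by decide) (by decide))
    (hC ee6 ee11 (by decide) (by decide))
    (hC ee9 ee11 (by decide) (by decide))

set_option synthInstance.maxHeartbeats 0 in
set_option synthInstance.maxSize 2000 in
lemma four_colorable : EdgeColorable PStar 4 :=
  ⟨fun e => c4f e.1, by decide⟩

set_option synthInstance.maxHeartbeats 0 in
set_option synthInstance.maxSize 2000 in
lemma del0_colorable : EdgeColorable (Gdel E0) 3 :=
  ⟨fun e => c3f0 e.1, by decide⟩

lemma del0_not_two : ¬ EdgeColorable (Gdel E0) 2 :=
  not_two w03 ⟨E3, by decide⟩ ⟨E5, by decide⟩ ⟨E6, by decide⟩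
    (by decide) (by decide) (by decide) (by decide) (by decide) (by decide)

set_option synthInstance.maxHeartbeats 0 in
set_option synthInstance.maxSize 2000 in
lemma del1_colorable : EdgeColorable (Gdel E1) 3 :=
  ⟨fun e => c3f1 e.1, by decide⟩

lemma del1_not_two : ¬ EdgeColorable (Gdel E1) 2 :=
  not_two w03 ⟨E3, by decide⟩ ⟨E5, by decide⟩ ⟨E6, by decide⟩
    (by decide) (by decide) (by decide) (by decide) (by decide) (by decide)

set_option synthInstance.maxHeartbeats 0 in
set_option synthInstance.maxSize 2000 in
lemma del2_colorable : EdgeColorable (Gdel E2) 3 :=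
  ⟨fun e => c3f2 e.1, by decide⟩

lemma del2_not_two : ¬ EdgeColorable (Gdel E2) 2 :=
  not_two w03 ⟨E3, by decide⟩ ⟨E5, by decide⟩ ⟨E6, by decide⟩
    (by decide) (by decide) (by decide) (by decide) (by decide) (by decide)

set_option synthInstance.maxHeartbeats 0 in
set_option synthInstance.maxSize 2000 in
lemma del3_colorable : EdgeColorable (Gdel E3) 3 :=
  ⟨fun e => c3f3 e.1, by decide⟩

lemma del3_not_two : ¬ EdgeColorable (Gdel E3) 2 :=
  not_two w02 ⟨E0, by decide⟩ ⟨E1, by decide⟩ ⟨E2, by decide⟩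
    (by decide) (by decide) (by decide) (by decide) (by decide) (by decide)

set_option synthInstance.maxHeartbeats 0 in
set_option synthInstance.maxSize 2000 in
lemma del4_colorable : EdgeColorable (Gdel E4) 3 :=
  ⟨fun e => c3f4 e.1, by decide⟩

lemma del4_not_two : ¬ EdgeColorable (Gdel E4) 2 :=
  not_two w02 ⟨E0, by decide⟩ ⟨E1, by decide⟩ ⟨E2, by decide⟩
    (by decide) (by decide) (by decide) (by decide) (by decide) (by decide)

set_option synthInstance.maxHeartbeats 0 in
set_option synthInstance.maxSize 2000 in
lemma del5_colorable : EdgeColorable (Gdel E5) 3 :=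
  ⟨fun e => c3f5 e.1, by decide⟩

lemma del5_not_two : ¬ EdgeColorable (Gdel E5) 2 :=
  not_two w02 ⟨E0, by decide⟩ ⟨E1, by decide⟩ ⟨E2, by decide⟩
    (by decide) (by decide) (by decide) (by decide) (by decide) (by decide)

set_option synthInstance.maxHeartbeats 0 in
set_option synthInstance.maxSize 2000 in
lemma del6_colorable : EdgeColorable (Gdel E6) 3 :=
  ⟨fun e => c3f6 e.1, by decide⟩

lemma del6_not_two : ¬ EdgeColorable (Gdel E6) 2 :=
  not_two w02 ⟨E0, by decide⟩ ⟨E1, by decide⟩ ⟨E2, by decide⟩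
    (by decide) (by decide) (by decide) (by decide) (by decide) (by decide)

set_option synthInstance.maxHeartbeats 0 in
set_option synthInstance.maxSize 2000 in
lemma del7_colorable : EdgeColorable (Gdel E7) 3 :=
  ⟨fun e => c3f7 e.1, by decide⟩

lemma del7_not_two : ¬ EdgeColorable (Gdel E7) 2 :=
  not_two w02 ⟨E0, by decide⟩ ⟨E1, by decide⟩ ⟨E2, by decide⟩
    (by decide) (by decide) (by decide) (by decide) (by decide) (by decide)

set_option synthInstance.maxHeartbeats 0 in
set_option synthInstance.maxSize 2000 in
lemma del8_colorable : EdgeColorable (Gdel E8) 3 :=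
  ⟨fun e => c3f8 e.1, by decide⟩

lemma del8_not_two : ¬ EdgeColorable (Gdel E8) 2 :=
  not_two w02 ⟨E0, by decide⟩ ⟨E1, by decide⟩ ⟨E2, by decide⟩
    (by decide) (by decide) (by decide) (by decide) (by decide) (by decide)

set_option synthInstance.maxHeartbeats 0 in
set_option synthInstance.maxSize 2000 in
lemma del9_colorable : EdgeColorable (Gdel E9) 3 :=
  ⟨fun e => c3f9 e.1, by decide⟩

lemma del9_not_two : ¬ EdgeColorable (Gdel E9) 2 :=
  not_two w02 ⟨E0, by decide⟩ ⟨E1, by decide⟩ ⟨E2, by decide⟩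
    (by decide) (by decide) (by decide) (by decide) (by decide) (by decide)

set_option synthInstance.maxHeartbeats 0 in
set_option synthInstance.maxSize 2000 in
lemma del10_colorable : EdgeColorable (Gdel E10) 3 :=
  ⟨fun e => c3f10 e.1, by decide⟩

lemma del10_not_two : ¬ EdgeColorable (Gdel E10) 2 :=
  not_two w02 ⟨E0, by decide⟩ ⟨E1, by decide⟩ ⟨E2, by decide⟩
    (by decide) (by decide) (by decide) (by decide) (by decide) (by decide)

set_option synthInstance.maxHeartbeats 0 in
set_option synthInstance.maxSize 2000 in
lemma del11_colorable : EdgeColorable (Gdel E11) 3 :=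
  ⟨fun e => c3f11 e.1, by decide⟩

lemma del11_not_two : ¬ EdgeColorable (Gdel E11) 2 :=
  not_two w02 ⟨E0, by decide⟩ ⟨E1, by decide⟩ ⟨E2, by decide⟩
    (by decide) (by decide) (by decide) (by decide) (by decide) (by decide)

/-- `P*` has 9 vertices, 12 edges, maximum degree 3, is
3-critical, and has average degree exactly `2 + 2/3`. -/
theorem stmt_17 :
    Fintype.card PV = 9 ∧
    PStar.edgeSet.ncard = 12 ∧
    (∀ v, deg PStar v ≤ 3) ∧ (∃ v, deg PStar v = 3) ∧
    IsCritical 3 PStar ∧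
    (2 * PStar.edgeSet.ncard : ℚ) / Fintype.card PV = 2 + 2/3 := by
  have hcard : Fintype.card PV = 9 := by decide
  have hE : PStar.edgeSet.ncard = 12 := by
    rw [Set.ncard_eq_toFinset_card']; decide
  have hdegle : ∀ v, deg PStar v ≤ 3 := by
    intro v
    rw [deg, Set.ncard_eq_toFinset_card']
    revert v; decide
  have hdeg3 : ∃ v, deg PStar v = 3 := by
    refine ⟨w02, ?_⟩
    rw [deg, Set.ncard_eq_toFinset_card']
    decide
  have hlist : ∀ e : PStar.edgeSet, e.1 = E0 ∨ e.1 = E1 ∨ e.1 = E2 ∨ e.1 = E3 ∨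
      e.1 = E4 ∨ e.1 = E5 ∨ e.1 = E6 ∨ e.1 = E7 ∨ e.1 = E8 ∨ e.1 = E9 ∨
      e.1 = E10 ∨ e.1 = E11 := by
    set_option synthInstance.maxHeartbeats 0 in
    set_option synthInstance.maxSize 2000 in
    decide
  refine ⟨hcard, hE, hdegle, hdeg3, ⟨hdegle, hdeg3, chromIndex_eq_succ four_colorable not_three, ?_⟩, ?_⟩
  · intro e he
    rcases hlist ⟨e, he⟩ with h|h|h|h|h|h|h|h|h|h|h|h <;> subst h
    · exact chromIndex_eq_succ del0_colorable del0_not_two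
    · exact chromIndex_eq_succ del1_colorable del1_not_two
    · exact chromIndex_eq_succ del2_colorable del2_not_two
    · exact chromIndex_eq_succ del3_colorable del3_not_two
    · exact chromIndex_eq_succ del4_colorable del4_not_two
    · exact chromIndex_eq_succ del5_colorable del5_not_two
    · exact chromIndex_eq_succ del6_colorable del6_not_two
    · exact chromIndex_eq_succ del7_colorable del7_not_two
    · exact chromIndex_eq_succ del8_colorable del8_not_two
    · exact chromIndex_eq_succ del9_colorable del9_not_two
    · exact chromIndex_eq_succ del10_colorable del10_not_two
    · exact chromIndex_eq_succ del11_colorable del11_not_two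
  · rw [hE, hcard]
    norm_num
end
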